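/- arXiv:2501.06930 — 2 statements merged into one kernel-verified Lean document; each statement's English description precedes it below -/
import Mathlib

section
/- Let (𝒜_γ)_{γ∈Γ} be a family of random variables with values in K_+(Π). Then the following equivalences hold. (a) [for all T, ε > 0: lim_{δ→0} sup_{γ∈Γ} P[sup_{π∈𝒜_γ} m_{T,δ}(π) > ε] = 0] holds if and only if [for all T, η > 0: lim_{δ→0} sup_{γ∈Γ} P[𝒜_γ ∩ T²_{T,δ,η} ≠ ∅] = 0]. (b) [for all T, ε > 0: lim_{δ→0} sup_{γ∈Γ} P[sup_{π∈𝒜_γ} m^J_{T,δ}(π) ≥ ε] = 0] holds if and only if [for all T, η > 0: lim_{δ→0} sup_{γ∈Γ} P[𝒜_γ ∩ (T^J_{T,δ,η} ∪ T^M_{T,δ,η}) ≠ ∅] = 0]. (c) [for all T, ε > 0: lim_{δ→0} sup_{γ∈Γ} P[sup_{π∈𝒜_γ} m^M_{T,δ}(π) ≥ ε] = 0] holds if and only if [for all T, η > 0: lim_{δ→0} sup_{γ∈Γ} P[𝒜_γ ∩ T^M_{T,δ,η} ≠ ∅] = 0]. -/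
noncomputable section

open Set Filter Topology MeasureTheory

namespace PathsPaper

/-- `tanh` extended to `EReal`, with `tanh (±∞) := ±1`. -/
def etanh (x : EReal) : ℝ :=
  if x = ⊤ then 1 else if x = ⊥ then -1 else Real.tanh x.toReal

/-- The squeezed space `ℝ²_c = (ℝ̄ × ℝ) ∪ {(∗,−∞), (∗,+∞)}`; here `Sum.inr false`
represents `(∗,−∞)` and `Sum.inr true` represents `(∗,+∞)`. -/
abbrev Rsq := (EReal × ℝ) ⊕ Bool

/-- The embedding `Θ` of the squeezed space into `ℝ²`. -/
def theta : Rsq → ℝ × ℝ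
  | Sum.inl p => (etanh p.1 / (1 + |p.2|), Real.tanh p.2)
  | Sum.inr b => (0, if b then 1 else -1)

/-- The metric `d_sqz` on the squeezed space (Euclidean distance of the `Θ`-images). -/
def dSqz (z z' : Rsq) : ℝ :=
  Real.sqrt (((theta z).1 - (theta z').1) ^ 2 + ((theta z).2 - (theta z').2) ^ 2)

/-- A path: a closed time domain `I ⊆ ℝ` together with a left value function `l = π(·−)`
and a right value function `r = π(·+)` with values in `ℝ̄ = EReal`, such that `r` is
right-continuous along `I`, `l` is left-continuous along `I`, `l t = lim_{s↑t, s∈I} r s`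
whenever `t` is a left accumulation point of `I`, and `r t = lim_{s↓t, s∈I} l s` whenever
`t` is a right accumulation point of `I`.  (The values outside `I` are normalised to `0`
so that a path is determined by its values on `I`.) -/
structure PathSp where
  I : Set ℝ
  closed_I : IsClosed I
  l : ℝ → EReal
  r : ℝ → EReal
  l_default : ∀ t, t ∉ I → l t = 0
  r_default : ∀ t, t ∉ I → r t = 0
  right_cont : ∀ t ∈ I, Tendsto r (𝓝[I ∩ Ioi t] t) (𝓝 (r t))
  left_cont : ∀ t ∈ I, Tendsto l (𝓝[I ∩ Iio t] t) (𝓝 (l t))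
  left_lim : ∀ t ∈ I, Tendsto r (𝓝[I ∩ Iio t] t) (𝓝 (l t))
  right_lim : ∀ t ∈ I, Tendsto l (𝓝[I ∩ Ioi t] t) (𝓝 (r t))

/-- The closed graph of a path, a subset of `S = ℝ̄ × ℝ`. -/
def graph (π : PathSp) : Set (EReal × ℝ) :=
  {p | p.2 ∈ π.I ∧ (p.1 = π.l p.2 ∨ p.1 = π.r p.2)}

/-- The filled graph of a path. -/
def fgraph (π : PathSp) : Set (EReal × ℝ) :=
  {p | p.2 ∈ π.I ∧ p.1 ∈ uIcc (π.l p.2) (π.r p.2)}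

/-- The strict total order `≺` on the (filled) graph of `π`: `(x,s) ≺ (y,t)` iff `s < t`,
or `s = t` and `x ≠ y` and `x` lies between `π(t−)` and `y`. -/
def gLt (π : PathSp) (p q : EReal × ℝ) : Prop :=
  p.2 < q.2 ∨ (p.2 = q.2 ∧ p.1 ≠ q.1 ∧ p.1 ∈ uIcc (π.l q.2) q.1)

/-- The total order `⪯` on the (filled) graph of `π`. -/
def gLe (π : PathSp) (p q : EReal × ℝ) : Prop := p = q ∨ gLt π p q

/-- `π∗` (resp. `π̄∗`): a graph together with the two points at infinity of the squeezed
space. -/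
def starSet (G : Set (EReal × ℝ)) : Set Rsq :=
  (Sum.inl '' G) ∪ {Sum.inr false, Sum.inr true}

/-- The order `≺` extended to the squeezed space, `(∗,−∞)` minimal, `(∗,+∞)` maximal. -/
def sLt (π : PathSp) : Rsq → Rsq → Prop
  | Sum.inl p, Sum.inl q => gLt π p q
  | Sum.inl _, Sum.inr b => b = true
  | Sum.inr b, Sum.inl _ => b = false
  | Sum.inr b, Sum.inr b' => b = false ∧ b' = true

/-- `C` is a correspondence between `A` and `B`. -/
def IsCorr (A B : Set Rsq) (C : Set (Rsq × Rsq)) : Prop :=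
  C ⊆ A ×ˢ B ∧ (∀ a ∈ A, ∃ b ∈ B, (a, b) ∈ C) ∧ (∀ b ∈ B, ∃ a ∈ A, (a, b) ∈ C)

/-- A correspondence is monotone if it contains no pair of order-violating elements. -/
def IsMono (π₁ π₂ : PathSp) (C : Set (Rsq × Rsq)) : Prop :=
  ¬ ∃ z ∈ C, ∃ z' ∈ C, sLt π₁ z.1 z'.1 ∧ sLt π₂ z'.2 z.2

def corrSup (C : Set (Rsq × Rsq)) : ℝ := sSup ((fun z : Rsq × Rsq => dSqz z.1 z.2) '' C)

/-- The Skorohod J1 metric on the path space. -/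
def dJ1 (π₁ π₂ : PathSp) : ℝ :=
  sInf {h | ∃ C, IsCorr (starSet (graph π₁)) (starSet (graph π₂)) C ∧ IsMono π₁ π₂ C ∧
    h = corrSup C}

/-- The Skorohod M1 metric on the path space. -/
def dM1 (π₁ π₂ : PathSp) : ℝ :=
  sInf {h | ∃ C, IsCorr (starSet (fgraph π₁)) (starSet (fgraph π₂)) C ∧ IsMono π₁ π₂ C ∧
    h = corrSup C}

/-- The topology generated by the open balls of a distance function (for a metric, this
is the metric topology). -/
def ballTop {X : Type*} (d : X → X → ℝ) : TopologicalSpace X :=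
  TopologicalSpace.generateFrom {U | ∃ x ε, 0 < ε ∧ U = {y | d x y < ε}}

/-- The J1 topology on the path space. -/
def J1Top : TopologicalSpace PathSp := ballTop dJ1

/-- The M1 topology on the path space. -/
def M1Top : TopologicalSpace PathSp := ballTop dM1

/-- Convergence of a sequence of paths in the J1 topology. -/
def J1Conv (πn : ℕ → PathSp) (π : PathSp) : Prop :=
  Tendsto (fun n => dJ1 (πn n) π) atTop (𝓝 0)

/-- Convergence of a sequence of paths in the M1 topology. -/
def M1Conv (πn : ℕ → PathSp) (π : PathSp) : Prop :=
  Tendsto (fun n => dM1 (πn n) π) atTop (𝓝 0)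

/-- The Hausdorff distance between two sets associated with a distance function `d`. -/
def hausDist {X : Type*} (d : X → X → ℝ) (A B : Set X) : ℝ :=
  max (sSup ((fun a => sInf ((fun b => d a b) '' B)) '' A))
      (sSup ((fun b => sInf ((fun a => d a b) '' A)) '' B))

/-- `K_+(X)`: the nonempty compact subsets of a topological space. -/
def KP {X : Type*} (τ : TopologicalSpace X) : Type _ :=
  {A : Set X // @IsCompact X τ A ∧ A.Nonempty}

/-- The Hausdorff topology on `K_+(X)`, from a metric `d` generating `τ`. -/
def KPtop {X : Type*} (τ : TopologicalSpace X) (d : X → X → ℝ) : TopologicalSpace (KP τ) :=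
  ballTop (fun A B => hausDist d A.1 B.1)

/-- Tightness of the laws of a family of random variables `A γ` with values in a space `K`
equipped with a topology `τK`: for every `ε > 0` there is a compact `C ⊆ K` whose
complement has probability at most `ε` for every `γ`. -/
def Tight {Γ : Type*} {K : Type*} (τK : TopologicalSpace K)
    {Ω : Γ → Type*} [∀ γ, MeasurableSpace (Ω γ)]
    (P : ∀ γ, Measure (Ω γ)) (A : ∀ γ, Ω γ → K) : Prop :=
  ∀ ε : ℝ, 0 < ε → ∃ C : Set K, @IsCompact K τK C ∧
    ∀ γ, P γ {ω | A γ ω ∉ C} ≤ ENNReal.ofReal ε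

/-- `Δ²_{T,δ}(π)`. -/
def Delta2 (π : PathSp) (T δ : ℝ) : Set (EReal × EReal) :=
  {p | ∃ s t : ℝ, -T ≤ s ∧ s ≤ t ∧ t ≤ T ∧ t - s ≤ δ ∧
    (p.1, s) ∈ graph π ∧ (p.2, t) ∈ graph π ∧ gLe π (p.1, s) (p.2, t)}

/-- `Δ³_{T,δ}(π)`. -/
def Delta3 (π : PathSp) (T δ : ℝ) : Set (EReal × EReal × EReal) :=
  {p | ∃ s t u : ℝ, -T ≤ s ∧ s ≤ t ∧ t ≤ u ∧ u ≤ T ∧ u - s ≤ δ ∧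
    (p.1, s) ∈ graph π ∧ (p.2.1, t) ∈ graph π ∧ (p.2.2, u) ∈ graph π ∧
    gLe π (p.1, s) (p.2.1, t) ∧ gLe π (p.2.1, t) (p.2.2, u)}

/-- `S⁺_{T,δ,ε,r}`. -/
def Splus (T δ ε r : ℝ) : Set PathSp :=
  {π | ∃ x y : EReal, (x, y) ∈ Delta2 π T δ ∧ x ≤ (r : EReal) ∧ ((r + ε : ℝ) : EReal) ≤ y}

/-- `S⁻_{T,δ,ε,r}`. -/
def Sminus (T δ ε r : ℝ) : Set PathSp :=
  {π | ∃ x y : EReal, (x, y) ∈ Delta2 π T δ ∧ y ≤ (r : EReal) ∧ ((r + ε : ℝ) : EReal) ≤ x}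

/-- `S²_{T,δ,ε,r}`. -/
def S2 (T δ ε r : ℝ) : Set PathSp := Splus T δ ε r ∪ Sminus T δ ε r

/-- `S^{+−}_{T,δ,ε,r}`. -/
def Spm (T δ ε r : ℝ) : Set PathSp :=
  {π | ∃ x y z : EReal, (x, y, z) ∈ Delta3 π T δ ∧
    x ≤ (r : EReal) ∧ z ≤ (r : EReal) ∧ ((r + ε : ℝ) : EReal) ≤ y}

/-- `S^{−+}_{T,δ,ε,r}`. -/
def Smp (T δ ε r : ℝ) : Set PathSp :=
  {π | ∃ x y z : EReal, (x, y, z) ∈ Delta3 π T δ ∧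
    y ≤ (r : EReal) ∧ ((r + ε : ℝ) : EReal) ≤ x ∧ ((r + ε : ℝ) : EReal) ≤ z}

/-- `S^{++}_{T,δ,ε,r}`. -/
def Spp (T δ ε r : ℝ) : Set PathSp :=
  {π | ∃ x y z : EReal, (x, y, z) ∈ Delta3 π T δ ∧
    x ≤ (r : EReal) ∧ ((r + ε : ℝ) : EReal) ≤ y ∧ y ≤ ((r + 2 * ε : ℝ) : EReal) ∧
    ((r + 3 * ε : ℝ) : EReal) ≤ z}

/-- `S^{−−}_{T,δ,ε,r}`. -/
def Smm (T δ ε r : ℝ) : Set PathSp :=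
  {π | ∃ x y z : EReal, (x, y, z) ∈ Delta3 π T δ ∧
    z ≤ (r : EReal) ∧ ((r + ε : ℝ) : EReal) ≤ y ∧ y ≤ ((r + 2 * ε : ℝ) : EReal) ∧
    ((r + 3 * ε : ℝ) : EReal) ≤ x}

/-- `S^J_{T,δ,ε,r}`. -/
def SJ (T δ ε r : ℝ) : Set PathSp := Spp T δ ε r ∪ Smm T δ ε r

/-- `S^M_{T,δ,ε,r}`. -/
def SM (T δ ε r : ℝ) : Set PathSp := Spm T δ ε r ∪ Smp T δ ε r

/-- `Δ²_{T,δ}(π₁,π₂)` for a pair of paths. -/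
def Delta2Pair (π₁ π₂ : PathSp) (T δ : ℝ) : Set (EReal × EReal × EReal × EReal) :=
  {q | ∃ s₁ t₁ s₂ t₂ : ℝ,
    -T ≤ s₁ ∧ s₁ ≤ t₁ ∧ t₁ ≤ T ∧ -T ≤ s₂ ∧ s₂ ≤ t₂ ∧ t₂ ≤ T ∧
    (q.1, s₁) ∈ graph π₁ ∧ (q.2.1, t₁) ∈ graph π₁ ∧ gLe π₁ (q.1, s₁) (q.2.1, t₁) ∧
    (q.2.2.1, s₂) ∈ graph π₂ ∧ (q.2.2.2, t₂) ∈ graph π₂ ∧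
    gLe π₂ (q.2.2.1, s₂) (q.2.2.2, t₂) ∧
    max t₁ t₂ - min s₁ s₂ ≤ δ}

/-- `C^M_{T,δ,ε,r}`. -/
def CM (T δ ε r : ℝ) : Set (PathSp × PathSp) :=
  {pp | ∃ x₁ y₁ x₂ y₂ : EReal, (x₁, y₁, x₂, y₂) ∈ Delta2Pair pp.1 pp.2 T δ ∧
    x₁ ≤ (r : EReal) ∧ y₂ ≤ (r : EReal) ∧
    ((r + ε : ℝ) : EReal) ≤ y₁ ∧ ((r + ε : ℝ) : EReal) ≤ x₂}

/-- `φ(x) = x/√(1+x²)` extended to `ℝ̄`. -/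
def phiR (x : EReal) : ℝ :=
  if x = ⊤ then 1 else if x = ⊥ then -1 else x.toReal / Real.sqrt (1 + x.toReal ^ 2)

/-- The metric `d_ℝ̄` on `ℝ̄`. -/
def dR (x y : EReal) : ℝ := |phiR x - phiR y|

/-- The modulus of continuity `m_{T,δ}(π)`. -/
def modC (π : PathSp) (T δ : ℝ) : ℝ :=
  sSup {h | ∃ x y : EReal, (x, y) ∈ Delta2 π T δ ∧ h = dR x y}

/-- The modulus `m^J_{T,δ}(π)`. -/
def modJ (π : PathSp) (T δ : ℝ) : ℝ :=
  sSup {h | ∃ x y z : EReal, (x, y, z) ∈ Delta3 π T δ ∧ h = min (dR y x) (dR y z)}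

/-- The modulus `m^M_{T,δ}(π)`. -/
def modM (π : PathSp) (T δ : ℝ) : ℝ :=
  sSup {h | ∃ x y z : EReal, (x, y, z) ∈ Delta3 π T δ ∧
    h = sInf ((fun w => dR y w) '' uIcc x z)}

/-- `T²_{T,δ,η}`. -/
def T2set (T δ η : ℝ) : Set PathSp :=
  {π | ∃ x y : EReal, (x, y) ∈ Delta2 π T δ ∧ dR x y > η}

/-- `T⁺_{T,δ,η}`. -/
def Tplus (T δ η : ℝ) : Set PathSp :=
  {π | ∃ x y : EReal, (x, y) ∈ Delta2 π T δ ∧ x < y ∧ dR x y > η}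

/-- `T⁻_{T,δ,η}`. -/
def Tminus (T δ η : ℝ) : Set PathSp :=
  {π | ∃ x y : EReal, (x, y) ∈ Delta2 π T δ ∧ y < x ∧ dR x y > η}

/-- `T^{++}_{T,δ,η}`. -/
def Tpp (T δ η : ℝ) : Set PathSp :=
  {π | ∃ x y z : EReal, (x, y, z) ∈ Delta3 π T δ ∧ x < y ∧ y < z ∧
    dR x y > η ∧ dR y z > η}

/-- `T^{+−}_{T,δ,η}`. -/
def Tpm (T δ η : ℝ) : Set PathSp :=
  {π | ∃ x y z : EReal, (x, y, z) ∈ Delta3 π T δ ∧ x < y ∧ z < y ∧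
    dR x y > η ∧ dR y z > η}

/-- `T^{−+}_{T,δ,η}`. -/
def Tmp (T δ η : ℝ) : Set PathSp :=
  {π | ∃ x y z : EReal, (x, y, z) ∈ Delta3 π T δ ∧ y < x ∧ y < z ∧
    dR x y > η ∧ dR y z > η}

/-- `T^{−−}_{T,δ,η}`. -/
def Tmm (T δ η : ℝ) : Set PathSp :=
  {π | ∃ x y z : EReal, (x, y, z) ∈ Delta3 π T δ ∧ y < x ∧ z < y ∧
    dR x y > η ∧ dR y z > η}

/-- `T^J_{T,δ,η}`. -/
def TJ (T δ η : ℝ) : Set PathSp := Tpp T δ η ∪ Tmm T δ η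

/-- `T^M_{T,δ,η}`. -/
def TM (T δ η : ℝ) : Set PathSp := Tpm T δ η ∪ Tmp T δ η

/-- A continuous path. -/
def IsContP (π : PathSp) : Prop := ∀ t ∈ π.I, π.l t = π.r t

/-- The space `Π_c` of continuous paths. -/
def PathC : Type := {π : PathSp // IsContP π}

/-- The (J1 = M1) metric on `Π_c`. -/
def dC (π₁ π₂ : PathC) : ℝ := dJ1 π₁.1 π₂.1

/-- The topology on `Π_c`. -/
def CTop : TopologicalSpace PathC := ballTop dC

/-- A connected path: the domain is an interval. -/
def IsConn (π : PathSp) : Prop := π.I.OrdConnected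

/-- A bi-infinite path: the domain is all of `ℝ`. -/
def IsBiInf (π : PathSp) : Prop := π.I = univ

/-- `π'` extends `π`. -/
def ExtendsP (π' π : PathSp) : Prop := fgraph π ⊆ fgraph π'

/-- The relation `π₁ ◁ π₂`. -/
def OrdBelow (π₁ π₂ : PathSp) : Prop :=
  ∃ π₁' π₂' : PathSp, IsBiInf π₁' ∧ IsBiInf π₂' ∧ ExtendsP π₁' π₁ ∧ ExtendsP π₂' π₂ ∧
    ∀ t : ℝ, π₁'.l t ≤ π₂'.l t ∧ π₁'.r t ≤ π₂'.r t

/-- A noncrossing set of paths. -/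
def Noncrossing (A : Set PathSp) : Prop :=
  ∀ π₁ ∈ A, ∀ π₂ ∈ A, OrdBelow π₁ π₂ ∨ OrdBelow π₂ π₁

/-- `π₁` crosses `π₂`. -/
def Crosses (π₁ π₂ : PathSp) : Prop := ¬ OrdBelow π₁ π₂ ∧ ¬ OrdBelow π₂ π₁

/-- `π₁` collides with `π₂` at time `t`: at time `t` the two paths jump over some
interval in opposite directions. -/
def CollidesAt (π₁ π₂ : PathSp) (t : ℝ) : Prop :=
  t ∈ π₁.I ∧ t ∈ π₂.I ∧
  ((π₁.r t < π₁.l t ∧ π₁.r t < π₂.r t ∧ π₂.l t < π₁.l t ∧ π₂.l t < π₂.r t) ∨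
   (π₁.l t < π₁.r t ∧ π₁.l t < π₂.l t ∧ π₂.r t < π₁.r t ∧ π₂.r t < π₂.l t))

/-- `∂I`: the finite boundary points of the domain of `π`. -/
def bdryI (π : PathSp) : Set ℝ := π.I \ interior π.I

/-- `t` is the (finite) minimum of `I`. -/
def IsMinOf (I : Set ℝ) (t : ℝ) : Prop := t ∈ I ∧ ∀ s ∈ I, t ≤ s

/-- `t` is the (finite) maximum of `I`. -/
def IsMaxOf (I : Set ℝ) (t : ℝ) : Prop := t ∈ I ∧ ∀ s ∈ I, s ≤ t

/-- `∂⁻I`, the set of finite lower boundary points. -/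
def bdryMinus (I : Set ℝ) : Set ℝ := {t | IsMinOf I t}

/-- `∂⁺I`, the set of finite upper boundary points. -/
def bdryPlus (I : Set ℝ) : Set ℝ := {t | IsMaxOf I t}

/-- Evaluation of a path at a point `t±` of the split real line; `(t, false)` stands
for `t−` and `(t, true)` for `t+`. -/
def pev (π : PathSp) (tb : ℝ × Bool) : EReal := if tb.2 then π.r tb.1 else π.l tb.1

/-- `I^𝔰_π`: points `t±` with `t ∈ I_π`, excluding `s−` and `u+` where `s, u` are the
initial and final times. -/
def Isplit (π : PathSp) : Set (ℝ × Bool) :=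
  {tb | tb.1 ∈ π.I ∧ ¬ (tb.2 = false ∧ IsMinOf π.I tb.1) ∧ ¬ (tb.2 = true ∧ IsMaxOf π.I tb.1)}

/-- `I^l_π`. -/
def Il (π : PathSp) : Set (ℝ × Bool) :=
  Isplit π ∪ {tb | tb.2 = false ∧ IsMinOf π.I tb.1 ∧ π.r tb.1 < π.l tb.1}
    ∪ {tb | tb.2 = true ∧ IsMaxOf π.I tb.1 ∧ π.l tb.1 < π.r tb.1}

/-- `I^r_π`. -/
def Ir (π : PathSp) : Set (ℝ × Bool) :=
  Isplit π ∪ {tb | tb.2 = false ∧ IsMinOf π.I tb.1 ∧ π.l tb.1 < π.r tb.1}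
    ∪ {tb | tb.2 = true ∧ IsMaxOf π.I tb.1 ∧ π.r tb.1 < π.l tb.1}

/-- `L(π)`. -/
def Lset (π : PathSp) : Set (EReal × ℝ × Bool) := {p | p.2 ∈ Il π ∧ p.1 < pev π p.2}

/-- `R(π)`. -/
def Rset (π : PathSp) : Set (EReal × ℝ × Bool) := {p | p.2 ∈ Ir π ∧ pev π p.2 < p.1}

/-- `L°(π)`. -/
def Lo (π : PathSp) : Set (EReal × ℝ) :=
  {p | p.2 ∈ interior π.I ∧ p.1 < min (π.l p.2) (π.r p.2)}

/-- `L̄(π)`. -/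
def Lbar (π : PathSp) : Set (EReal × ℝ) :=
  {p | p.2 ∈ π.I ∧ p.1 ≤ max (π.l p.2) (π.r p.2)}

/-- `L^c(π) = S ∖ L°(π)`. -/
def Lc (π : PathSp) : Set (EReal × ℝ) := (Lo π)ᶜ

/-- `R°(π)`. -/
def Ro (π : PathSp) : Set (EReal × ℝ) :=
  {p | p.2 ∈ interior π.I ∧ max (π.l p.2) (π.r p.2) < p.1}

/-- `R̄(π)`. -/
def Rbar (π : PathSp) : Set (EReal × ℝ) :=
  {p | p.2 ∈ π.I ∧ min (π.l p.2) (π.r p.2) ≤ p.1}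

/-- `π^⟨2⟩`: the ordered pairs of points of the closed graph. -/
def gr2 (π : PathSp) : Set ((EReal × ℝ) × (EReal × ℝ)) :=
  {q | q.1 ∈ graph π ∧ q.2 ∈ graph π ∧ gLe π q.1 q.2}

/-- `π̄^⟨2⟩`: the ordered pairs of points of the filled graph. -/
def fgr2 (π : PathSp) : Set ((EReal × ℝ) × (EReal × ℝ)) :=
  {q | q.1 ∈ fgraph π ∧ q.2 ∈ fgraph π ∧ gLe π q.1 q.2}

/-- Convergence `A_n → B` of closed subsets of `Y` in the local Hausdorff topology,
expressed through its standard sequential characterisation (Lemma 2.2 of the paper,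
which also shows this is independent of the choice of metric): every point of `B` is a
limit of points of `A_{n,∞} = A_n ∪ {∞}` in the one-point compactification, and every
cluster point in `Y` of such a sequence lies in `B`. -/
def LHConv {Y : Type*} [TopologicalSpace Y] (A : ℕ → Set Y) (B : Set Y) : Prop :=
  (∀ x ∈ B, ∃ u : ℕ → OnePoint Y,
    (∀ n, u n ∈ insert OnePoint.infty ((fun y : Y => (y : OnePoint Y)) '' A n)) ∧
      Tendsto u atTop (𝓝 (x : OnePoint Y))) ∧
  (∀ x : Y, (∃ u : ℕ → OnePoint Y,
    (∀ n, u n ∈ insert OnePoint.infty ((fun y : Y => (y : OnePoint Y)) '' A n)) ∧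
      MapClusterPt (x : OnePoint Y) atTop u) → x ∈ B)

/-- Convergence of compact sets of paths in the Hausdorff "metric" associated to `dM1`. -/
def HausConvM1 (A : ℕ → Set PathSp) (B : Set PathSp) : Prop :=
  Tendsto (fun n => hausDist dM1 (A n) B) atTop (𝓝 0)

/-! ### Auxiliary lemmas for the alternative tightness criteria -/

private lemma aux_mono' {a b : ℝ} (h : a ≤ b) :
    a / Real.sqrt (1 + a ^ 2) ≤ b / Real.sqrt (1 + b ^ 2) := by
  have ha : (0:ℝ) < Real.sqrt (1 + a ^ 2) := Real.sqrt_pos.2 (by positivity)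
  have hb : (0:ℝ) < Real.sqrt (1 + b ^ 2) := Real.sqrt_pos.2 (by positivity)
  rw [div_le_div_iff₀ ha hb]
  have ha2 : Real.sqrt (1 + a ^ 2) ^ 2 = 1 + a ^ 2 := Real.sq_sqrt (by positivity)
  have hb2 : Real.sqrt (1 + b ^ 2) ^ 2 = 1 + b ^ 2 := Real.sq_sqrt (by positivity)
  rcases le_or_gt 0 a with h0 | h0
  · have hb0 : (0:ℝ) ≤ b := le_trans h0 h
    have h1 : 0 ≤ a * Real.sqrt (1 + b ^ 2) := mul_nonneg h0 hb.le
    have h2 : 0 ≤ b * Real.sqrt (1 + a ^ 2) := mul_nonneg hb0 ha.le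
    nlinarith [sq_nonneg (a * Real.sqrt (1 + b ^ 2) + b * Real.sqrt (1 + a ^ 2))]
  · rcases le_or_gt 0 b with h0' | h0'
    · have h1 : a * Real.sqrt (1 + b ^ 2) ≤ 0 := mul_nonpos_of_nonpos_of_nonneg h0.le hb.le
      have h2 : 0 ≤ b * Real.sqrt (1 + a ^ 2) := mul_nonneg h0' ha.le
      linarith
    · have h1 : a * Real.sqrt (1 + b ^ 2) ≤ 0 := mul_nonpos_of_nonpos_of_nonneg h0.le hb.le
      have h2 : b * Real.sqrt (1 + a ^ 2) ≤ 0 := mul_nonpos_of_nonpos_of_nonneg h0'.le ha.le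
      nlinarith [sq_nonneg (a * Real.sqrt (1 + b ^ 2) + b * Real.sqrt (1 + a ^ 2))]

private lemma aux_bound' (t : ℝ) : |t / Real.sqrt (1 + t ^ 2)| ≤ 1 := by
  have ht : (0:ℝ) < Real.sqrt (1 + t ^ 2) := Real.sqrt_pos.2 (by positivity)
  rw [abs_div, abs_of_pos ht, div_le_one ht]
  calc |t| = Real.sqrt (t ^ 2) := (Real.sqrt_sq_eq_abs t).symm
    _ ≤ Real.sqrt (1 + t ^ 2) := Real.sqrt_le_sqrt (by linarith)

lemma phiR_bound (x : EReal) : |phiR x| ≤ 1 := by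
  rw [phiR]
  split_ifs with h1 h2
  · norm_num
  · norm_num
  · exact aux_bound' _

lemma phiR_coe (a : ℝ) : phiR (a : EReal) = a / Real.sqrt (1 + a ^ 2) := by
  simp [phiR]

lemma phiR_mono : Monotone phiR := by
  intro x y h
  induction x using EReal.rec with
  | bot =>
    have hx : phiR ⊥ = -1 := by simp [phiR]
    rw [hx]
    exact (abs_le.1 (phiR_bound y)).1
  | coe a =>
    induction y using EReal.rec with
    | bot => exact absurd (le_bot_iff.1 h) (EReal.coe_ne_bot a)
    | coe b =>
      rw [phiR_coe, phiR_coe]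
      exact aux_mono' (by exact_mod_cast h)
    | top =>
      have hy : phiR ⊤ = 1 := by simp [phiR]
      rw [hy]
      exact (abs_le.1 (phiR_bound _)).2
  | top =>
    rw [top_le_iff.1 h]

lemma dR_nonneg (x y : EReal) : 0 ≤ dR x y := abs_nonneg _

lemma dR_self (x : EReal) : dR x x = 0 := by simp [dR]

lemma dR_comm (x y : EReal) : dR x y = dR y x := abs_sub_comm _ _

lemma dR_le_two (x y : EReal) : dR x y ≤ 2 := by
  have hx := abs_le.1 (phiR_bound x)
  have hy := abs_le.1 (phiR_bound y)
  rw [dR, abs_le]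
  constructor <;> linarith [hx.1, hx.2, hy.1, hy.2]

private lemma lt_sSup_iff'' {S : Set ℝ} (hb : ∀ h ∈ S, h ≤ 2) {η : ℝ} (hη : 0 ≤ η) :
    η < sSup S ↔ ∃ h ∈ S, η < h := by
  rcases S.eq_empty_or_nonempty with rfl | hne
  · rw [Real.sSup_empty]
    constructor
    · intro h; exact absurd h (not_lt.2 hη)
    · rintro ⟨h, hh, -⟩; exact hh.elim
  · exact lt_csSup_iff ⟨2, fun x hx => hb x hx⟩ hne

lemma modC_le_two (π : PathSp) (T δ : ℝ) : modC π T δ ≤ 2 :=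
  Real.sSup_le (by rintro h ⟨x, y, -, rfl⟩; exact dR_le_two x y) (by norm_num)

lemma modJ_le_two (π : PathSp) (T δ : ℝ) : modJ π T δ ≤ 2 :=
  Real.sSup_le (by rintro h ⟨x, y, z, -, rfl⟩; exact le_trans (min_le_left _ _) (dR_le_two y x))
    (by norm_num)

private lemma bddBelow_dR_image (y : EReal) (s : Set EReal) :
    BddBelow ((fun w => dR y w) '' s) :=
  ⟨0, by rintro w ⟨v, -, rfl⟩; exact dR_nonneg y v⟩

lemma modM_le_two (π : PathSp) (T δ : ℝ) : modM π T δ ≤ 2 := by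
  refine Real.sSup_le ?_ (by norm_num)
  rintro h ⟨x, y, z, -, rfl⟩
  exact le_trans (csInf_le (bddBelow_dR_image y _) ⟨x, left_mem_uIcc, rfl⟩) (dR_le_two y x)

lemma modC_gt_iff (π : PathSp) (T δ : ℝ) {η : ℝ} (hη : 0 ≤ η) :
    η < modC π T δ ↔ π ∈ T2set T δ η := by
  rw [modC, lt_sSup_iff'' (by rintro h ⟨x, y, -, rfl⟩; exact dR_le_two x y) hη]
  constructor
  · rintro ⟨h, ⟨x, y, hxy, rfl⟩, hh⟩; exact ⟨x, y, hxy, hh⟩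
  · rintro ⟨x, y, hxy, hh⟩; exact ⟨_, ⟨x, y, hxy, rfl⟩, hh⟩

lemma modJ_gt_iff (π : PathSp) (T δ : ℝ) {η : ℝ} (hη : 0 ≤ η) :
    η < modJ π T δ ↔ π ∈ TJ T δ η ∪ TM T δ η := by
  rw [modJ, lt_sSup_iff''
    (by rintro h ⟨x, y, z, -, rfl⟩; exact le_trans (min_le_left _ _) (dR_le_two y x)) hη]
  constructor
  · rintro ⟨h, ⟨x, y, z, hmem, rfl⟩, hh⟩
    rw [lt_min_iff] at hh
    obtain ⟨h1, h2⟩ := hh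
    have h1' : η < dR x y := by rw [dR_comm]; exact h1
    have hxy : x ≠ y := by
      rintro rfl; rw [dR_self] at h1; exact absurd h1 (not_lt.2 hη)
    have hzy : z ≠ y := by
      rintro rfl; rw [dR_self] at h2
      exact absurd h2 (not_lt.2 hη)
    rcases hxy.lt_or_gt with hx | hx <;> rcases hzy.lt_or_gt with hz | hz
    · exact Or.inr (Or.inl ⟨x, y, z, hmem, hx, hz, h1', h2⟩)
    · exact Or.inl (Or.inl ⟨x, y, z, hmem, hx, hz, h1', h2⟩)
    · exact Or.inl (Or.inr ⟨x, y, z, hmem, hx, hz, h1', h2⟩)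
    · exact Or.inr (Or.inr ⟨x, y, z, hmem, hx, hz, h1', h2⟩)
  · rintro ((⟨x, y, z, hmem, hx, hz, h1, h2⟩ | ⟨x, y, z, hmem, hx, hz, h1, h2⟩) |
      (⟨x, y, z, hmem, hx, hz, h1, h2⟩ | ⟨x, y, z, hmem, hx, hz, h1, h2⟩)) <;>
    exact ⟨_, ⟨x, y, z, hmem, rfl⟩, lt_min (by rw [dR_comm]; exact h1) h2⟩

lemma modM_gt_iff (π : PathSp) (T δ : ℝ) {η : ℝ} (hη : 0 ≤ η) :
    η < modM π T δ ↔ π ∈ TM T δ η := by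
  rw [modM, lt_sSup_iff'' ?hb hη]
  case hb =>
    rintro h ⟨x, y, z, -, rfl⟩
    exact le_trans (csInf_le (bddBelow_dR_image y _) ⟨x, left_mem_uIcc, rfl⟩) (dR_le_two y x)
  constructor
  · rintro ⟨h, ⟨x, y, z, hmem, rfl⟩, hh⟩
    have hbb := bddBelow_dR_image y (uIcc x z)
    have h1 : η < dR y x := lt_of_lt_of_le hh (csInf_le hbb ⟨x, left_mem_uIcc, rfl⟩)
    have h2 : η < dR y z := lt_of_lt_of_le hh (csInf_le hbb ⟨z, right_mem_uIcc, rfl⟩)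
    have hy : y ∉ uIcc x z := by
      intro hy
      have := lt_of_lt_of_le hh (csInf_le hbb ⟨y, hy, dR_self y⟩)
      exact absurd this (not_lt.2 hη)
    have hyx : y ≠ x := by
      rintro rfl; rw [dR_self] at h1; exact absurd h1 (not_lt.2 hη)
    have hyz : y ≠ z := by
      rintro rfl; rw [dR_self] at h2; exact absurd h2 (not_lt.2 hη)
    have h1' : η < dR x y := by rw [dR_comm]; exact h1
    rcases hyx.lt_or_gt with ha | ha <;> rcases hyz.lt_or_gt with hb | hb
    · exact Or.inr ⟨x, y, z, hmem, ha, hb, h1', h2⟩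
    · exact absurd (Set.mem_uIcc.2 (Or.inr ⟨hb.le, ha.le⟩)) hy
    · exact absurd (Set.mem_uIcc.2 (Or.inl ⟨ha.le, hb.le⟩)) hy
    · exact Or.inl ⟨x, y, z, hmem, ha, hb, h1', h2⟩
  · have hne : ∀ x z : EReal, ((fun w => dR (0:EReal) w) '' uIcc x z).Nonempty := by
      intro x z; exact ⟨_, x, left_mem_uIcc, rfl⟩
    rintro (⟨x, y, z, hmem, hx, hz, h1, h2⟩ | ⟨x, y, z, hmem, hx, hz, h1, h2⟩)
    · -- Tpm : x < y, z < y
      refine ⟨_, ⟨x, y, z, hmem, rfl⟩, ?_⟩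
      have hne' : ((fun w => dR y w) '' uIcc x z).Nonempty := ⟨_, x, left_mem_uIcc, rfl⟩
      rcases le_total x z with hxz | hxz
      · refine lt_of_lt_of_le h2 (le_csInf hne' ?_)
        rintro w ⟨v, hv, rfl⟩
        have hvz : v ≤ z := by
          rcases Set.mem_uIcc.1 hv with ⟨-, h'⟩ | ⟨-, h'⟩
          · exact h'
          · exact le_trans h' hxz
        have hpz : phiR v ≤ phiR z := phiR_mono hvz
        have hzy : phiR z ≤ phiR y := phiR_mono hz.le
        have heq : dR y z = phiR y - phiR z := by
          rw [dR, abs_of_nonneg (by linarith)]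
        calc dR y z = phiR y - phiR z := heq
          _ ≤ phiR y - phiR v := by linarith
          _ ≤ |phiR y - phiR v| := le_abs_self _
      · have h1' : η < dR y x := by rw [dR_comm]; exact h1
        refine lt_of_lt_of_le h1' (le_csInf hne' ?_)
        rintro w ⟨v, hv, rfl⟩
        have hvx : v ≤ x := by
          rcases Set.mem_uIcc.1 hv with ⟨-, h'⟩ | ⟨-, h'⟩
          · exact le_trans h' hxz
          · exact h'
        have hpx : phiR v ≤ phiR x := phiR_mono hvx
        have hxy' : phiR x ≤ phiR y := phiR_mono hx.le
        have heq : dR y x = phiR y - phiR x := by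
          rw [dR, abs_of_nonneg (by linarith)]
        calc dR y x = phiR y - phiR x := heq
          _ ≤ phiR y - phiR v := by linarith
          _ ≤ |phiR y - phiR v| := le_abs_self _
    · -- Tmp : y < x, y < z
      refine ⟨_, ⟨x, y, z, hmem, rfl⟩, ?_⟩
      have hne' : ((fun w => dR y w) '' uIcc x z).Nonempty := ⟨_, x, left_mem_uIcc, rfl⟩
      rcases le_total x z with hxz | hxz
      · have h1' : η < dR y x := by rw [dR_comm]; exact h1
        refine lt_of_lt_of_le h1' (le_csInf hne' ?_)
        rintro w ⟨v, hv, rfl⟩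
        have hvx : x ≤ v := by
          rcases Set.mem_uIcc.1 hv with ⟨h', -⟩ | ⟨h', -⟩
          · exact h'
          · exact le_trans hxz h'
        have hpx : phiR x ≤ phiR v := phiR_mono hvx
        have hxy' : phiR y ≤ phiR x := phiR_mono hx.le
        have heq : dR y x = phiR x - phiR y := by
          rw [dR, abs_sub_comm, abs_of_nonneg (by linarith)]
        calc dR y x = phiR x - phiR y := heq
          _ ≤ phiR v - phiR y := by linarith
          _ ≤ |phiR v - phiR y| := le_abs_self _
          _ = |phiR y - phiR v| := abs_sub_comm _ _
      · refine lt_of_lt_of_le h2 (le_csInf hne' ?_)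
        rintro w ⟨v, hv, rfl⟩
        have hvz : z ≤ v := by
          rcases Set.mem_uIcc.1 hv with ⟨h', -⟩ | ⟨h', -⟩
          · exact le_trans hxz h'
          · exact h'
        have hpz : phiR z ≤ phiR v := phiR_mono hvz
        have hzy : phiR y ≤ phiR z := phiR_mono hz.le
        have heq : dR y z = phiR z - phiR y := by
          rw [dR, abs_sub_comm, abs_of_nonneg (by linarith)]
        calc dR y z = phiR z - phiR y := heq
          _ ≤ phiR v - phiR y := by linarith
          _ ≤ |phiR v - phiR y| := le_abs_self _
          _ = |phiR y - phiR v| := abs_sub_comm _ _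

/-- The generic translation between moduli events and `T`-set events. -/
private lemma event_eq {f : PathSp → ℝ} (hf : ∀ π, f π ≤ 2) {S : Set PathSp}
    (hS : S.Nonempty) {η : ℝ} (hη : 0 ≤ η) {Tst : Set PathSp}
    (hiff : ∀ π', η < f π' ↔ π' ∈ Tst) :
    η < sSup (f '' S) ↔ (S ∩ Tst).Nonempty := by
  rw [lt_sSup_iff'' (by rintro h ⟨π', hπ, rfl⟩; exact hf π') hη]
  constructor
  · rintro ⟨h, ⟨π', hπ, rfl⟩, hh⟩; exact ⟨π', hπ, (hiff π').1 hh⟩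
  · rintro ⟨π', hπ, hT⟩; exact ⟨f π', ⟨π', hπ, rfl⟩, (hiff π').2 hT⟩

private lemma le_sSup_image {f : PathSp → ℝ} (hf : ∀ π, f π ≤ 2) {S : Set PathSp}
    {π : PathSp} (hπ : π ∈ S) : f π ≤ sSup (f '' S) :=
  le_csSup ⟨2, by rintro h ⟨π', -, rfl⟩; exact hf π'⟩ (Set.mem_image_of_mem f hπ)

private lemma tendsto_squeeze {f g : ℝ → ENNReal}
    (hg : Tendsto g (𝓝[>] (0:ℝ)) (𝓝 0)) (hle : ∀ δ, f δ ≤ g δ) :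
    Tendsto f (𝓝[>] (0:ℝ)) (𝓝 0) :=
  tendsto_of_tendsto_of_tendsto_of_le_of_le tendsto_const_nhds hg (fun _ => zero_le) hle

/-- **Lemma (Alternative tightness criteria).**
For a family of `K_+(Π)`-valued random variables:
(a) the modulus condition with `m_{T,δ}` is equivalent to the condition with `T²_{T,δ,η}`;
(b) the modulus condition with `m^J_{T,δ}` is equivalent to the condition with
    `T^J_{T,δ,η} ∪ T^M_{T,δ,η}`;
(c) the modulus condition with `m^M_{T,δ}` is equivalent to the condition with
    `T^M_{T,δ,η}`. -/
theorem alternative_tightness_criteria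
    {Γ : Type*} {Ω : Γ → Type*} [∀ γ, MeasurableSpace (Ω γ)]
    (P : ∀ γ, Measure (Ω γ)) (hP : ∀ γ, IsProbabilityMeasure (P γ))
    (A : ∀ γ, Ω γ → KP J1Top)
    (hmeas : ∀ γ, @Measurable _ _ _ (@borel _ (KPtop J1Top dJ1)) (A γ)) :
    ((∀ T ε : ℝ, 0 < T → 0 < ε →
        Tendsto
          (fun δ : ℝ => ⨆ γ, P γ {ω | ε < sSup ((fun π => modC π T δ) '' (A γ ω).1)})
          (𝓝[>] (0 : ℝ)) (𝓝 (0 : ENNReal))) ↔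
      (∀ T η : ℝ, 0 < T → 0 < η →
        Tendsto (fun δ : ℝ => ⨆ γ, P γ {ω | ((A γ ω).1 ∩ T2set T δ η).Nonempty})
          (𝓝[>] (0 : ℝ)) (𝓝 (0 : ENNReal)))) ∧
    ((∀ T ε : ℝ, 0 < T → 0 < ε →
        Tendsto
          (fun δ : ℝ => ⨆ γ, P γ {ω | ε ≤ sSup ((fun π => modJ π T δ) '' (A γ ω).1)})
          (𝓝[>] (0 : ℝ)) (𝓝 (0 : ENNReal))) ↔
      (∀ T η : ℝ, 0 < T → 0 < η →
        Tendsto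
          (fun δ : ℝ => ⨆ γ, P γ {ω | ((A γ ω).1 ∩ (TJ T δ η ∪ TM T δ η)).Nonempty})
          (𝓝[>] (0 : ℝ)) (𝓝 (0 : ENNReal)))) ∧
    ((∀ T ε : ℝ, 0 < T → 0 < ε →
        Tendsto
          (fun δ : ℝ => ⨆ γ, P γ {ω | ε ≤ sSup ((fun π => modM π T δ) '' (A γ ω).1)})
          (𝓝[>] (0 : ℝ)) (𝓝 (0 : ENNReal))) ↔
      (∀ T η : ℝ, 0 < T → 0 < η →
        Tendsto (fun δ : ℝ => ⨆ γ, P γ {ω | ((A γ ω).1 ∩ TM T δ η).Nonempty})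
          (𝓝[>] (0 : ℝ)) (𝓝 (0 : ENNReal)))) := by
  refine ⟨⟨?_, ?_⟩, ⟨?_, ?_⟩, ⟨?_, ?_⟩⟩
  · -- (a) forward
    intro H T η hT hη
    refine (H T η hT hη).congr fun δ => ?_
    refine iSup_congr fun γ => ?_
    congr 1
    ext ω
    simp only [Set.mem_setOf_eq]
    exact event_eq (fun π => modC_le_two π T δ) (A γ ω).2.2 hη.le
      (fun π' => modC_gt_iff π' T δ hη.le)
  · -- (a) backward
    intro H T ε hT hε
    refine (H T ε hT hε).congr fun δ => ?_
    refine iSup_congr fun γ => ?_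
    congr 1
    ext ω
    simp only [Set.mem_setOf_eq]
    exact (event_eq (fun π => modC_le_two π T δ) (A γ ω).2.2 hε.le
      (fun π' => modC_gt_iff π' T δ hε.le)).symm
  · -- (b) forward
    intro H T η hT hη
    refine tendsto_squeeze (H T η hT hη) fun δ => ?_
    refine iSup_mono fun γ => measure_mono ?_
    intro ω hω
    simp only [Set.mem_setOf_eq] at hω ⊢
    obtain ⟨π', hπ, hT'⟩ := hω
    exact le_of_lt (lt_of_lt_of_le ((modJ_gt_iff π' T δ hη.le).2 hT')
      (le_sSup_image (fun π => modJ_le_two π T δ) hπ))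
  · -- (b) backward
    intro H T ε hT hε
    refine tendsto_squeeze (H T (ε / 2) hT (half_pos hε)) fun δ => ?_
    refine iSup_mono fun γ => measure_mono ?_
    intro ω hω
    simp only [Set.mem_setOf_eq] at hω ⊢
    have h2 : ε / 2 < sSup ((fun π => modJ π T δ) '' (A γ ω).1) :=
      lt_of_lt_of_le (half_lt_self hε) hω
    exact (event_eq (fun π => modJ_le_two π T δ) (A γ ω).2.2 (half_pos hε).le
      (fun π' => modJ_gt_iff π' T δ (half_pos hε).le)).1 h2
  · -- (c) forward
    intro H T η hT hη
    refine tendsto_squeeze (H T η hT hη) fun δ => ?_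
    refine iSup_mono fun γ => measure_mono ?_
    intro ω hω
    simp only [Set.mem_setOf_eq] at hω ⊢
    obtain ⟨π', hπ, hT'⟩ := hω
    exact le_of_lt (lt_of_lt_of_le ((modM_gt_iff π' T δ hη.le).2 hT')
      (le_sSup_image (fun π => modM_le_two π T δ) hπ))
  · -- (c) backward
    intro H T ε hT hε
    refine tendsto_squeeze (H T (ε / 2) hT (half_pos hε)) fun δ => ?_
    refine iSup_mono fun γ => measure_mono ?_
    intro ω hω
    simp only [Set.mem_setOf_eq] at hω ⊢
    have h2 : ε / 2 < sSup ((fun π => modM π T δ) '' (A γ ω).1) :=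
      lt_of_lt_of_le (half_lt_self hε) hω
    exact (event_eq (fun π => modM_le_two π T δ) (A γ ω).2.2 (half_pos hε).le
      (fun π' => modM_gt_iff π' T δ (half_pos hε).le)).1 h2

end PathsPaper
end
end

section
/- Assume that π_n ∈ Π^| satisfy π_n → π as n → ∞ in the M1 topology for some π ∈ Π^|. Then L̄(π_n) → L̄(π) and L^c(π_n) → L^c(π) in the local Hausdorff topology on Cl(S), where S := ℝ̄ × ℝ. -/
noncomputable section

open Set Filter Topology MeasureTheory

namespace PathsPaper

/-! ### tanh facts -/

lemma tanh_formula (x : ℝ) : Real.tanh x = 1 - 2 / (Real.exp (2*x) + 1) := by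
  have h2 : Real.exp (2*x) = Real.exp x * Real.exp x := by
    rw [two_mul, Real.exp_add]
  have hx : 0 < Real.exp x := Real.exp_pos x
  rw [Real.tanh_eq_sinh_div_cosh, Real.sinh_eq, Real.cosh_eq, Real.exp_neg, h2]
  field_simp
  ring

lemma exp_two_add_one_pos (x : ℝ) : 0 < Real.exp (2*x) + 1 := by positivity

lemma tanh_lt_one (x : ℝ) : Real.tanh x < 1 := by
  rw [tanh_formula]
  have := exp_two_add_one_pos x
  have : 0 < 2 / (Real.exp (2*x) + 1) := by positivity
  linarith

lemma neg_one_lt_tanh (x : ℝ) : -1 < Real.tanh x := by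
  rw [tanh_formula]
  have h := Real.exp_pos (2*x)
  have h1 : 2 / (Real.exp (2*x) + 1) < 2 := by
    rw [div_lt_iff₀ (exp_two_add_one_pos x)]
    nlinarith
  linarith

lemma abs_tanh_le_one (x : ℝ) : |Real.tanh x| ≤ 1 :=
  abs_le.2 ⟨(neg_one_lt_tanh x).le, (tanh_lt_one x).le⟩

lemma tanh_strictMono : StrictMono Real.tanh := by
  intro a b hab
  rw [tanh_formula, tanh_formula]
  have ha := exp_two_add_one_pos a
  have hb := exp_two_add_one_pos b
  have he : Real.exp (2*a) < Real.exp (2*b) := Real.exp_lt_exp.2 (by linarith)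
  have : 2 / (Real.exp (2*b) + 1) < 2 / (Real.exp (2*a) + 1) := by
    apply div_lt_div_of_pos_left (by norm_num) ha (by linarith)
  linarith

lemma tanh_continuous : Continuous Real.tanh := by
  have : Real.tanh = fun x => 1 - 2 / (Real.exp (2*x) + 1) := funext tanh_formula
  rw [this]
  exact continuous_const.sub (continuous_const.div
    ((Real.continuous_exp.comp (continuous_const.mul continuous_id)).add continuous_const)
    (fun x => (exp_two_add_one_pos x).ne'))

lemma tanh_surj {y : ℝ} (h1 : -1 < y) (h2 : y < 1) : ∃ x : ℝ, Real.tanh x = y := by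
  refine ⟨Real.log ((1+y)/(1-y)) / 2, ?_⟩
  have hy1 : 0 < 1 + y := by linarith
  have hy2 : 0 < 1 - y := by linarith
  have hpos : 0 < (1+y)/(1-y) := div_pos hy1 hy2
  rw [tanh_formula]
  have : 2 * (Real.log ((1+y)/(1-y)) / 2) = Real.log ((1+y)/(1-y)) := by ring
  rw [this, Real.exp_log hpos]
  field_simp
  ring
/-! ### etanh facts -/

@[simp] lemma etanh_top : etanh ⊤ = 1 := rfl
@[simp] lemma etanh_bot : etanh ⊥ = -1 := rfl
@[simp] lemma etanh_coe (x : ℝ) : etanh (x : EReal) = Real.tanh x := by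
  simp [etanh]

lemma etanh_mem_Icc (x : EReal) : etanh x ∈ Set.Icc (-1:ℝ) 1 := by
  induction x using EReal.rec with
  | bot => simp
  | coe x => simp [(neg_one_lt_tanh x).le, (tanh_lt_one x).le]
  | top => simp

lemma abs_etanh_le_one (x : EReal) : |etanh x| ≤ 1 := by
  have := etanh_mem_Icc x
  rw [abs_le]; exact ⟨this.1, this.2⟩

lemma etanh_strictMono : StrictMono etanh := by
  intro a b hab
  induction a using EReal.rec with
  | bot =>
    induction b using EReal.rec with
    | bot => exact absurd hab (lt_irrefl _)
    | coe b => simpa using neg_one_lt_tanh b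
    | top => norm_num
  | coe a =>
    induction b using EReal.rec with
    | bot => exact absurd hab (by simp)
    | coe b => simpa using tanh_strictMono (EReal.coe_lt_coe_iff.1 hab)
    | top => simpa using tanh_lt_one a
  | top => exact absurd hab (by simp)

/-- `etanh` as an order isomorphism onto `[-1,1]`. -/
def etanhIso : EReal ≃o Set.Icc (-1:ℝ) 1 := by
  refine StrictMono.orderIsoOfSurjective (fun x => ⟨etanh x, etanh_mem_Icc x⟩)
    (fun a b hab => ?_) (fun y => ?_)
  · exact Subtype.mk_lt_mk.2 (etanh_strictMono hab)
  · rcases eq_or_lt_of_le y.2.1 with h1 | h1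
    · exact ⟨⊥, by ext; simp [← h1]⟩
    rcases eq_or_lt_of_le y.2.2 with h2 | h2
    · exact ⟨⊤, by ext; simp [h2]⟩
    obtain ⟨x, hx⟩ := tanh_surj h1 h2
    exact ⟨(x : EReal), by ext; simp [hx]⟩

lemma etanh_continuous : Continuous etanh := by
  have : etanh = fun x => (etanhIso.toHomeomorph x : ℝ) := rfl
  rw [this]
  exact continuous_subtype_val.comp etanhIso.toHomeomorph.continuous

lemma etanh_le_etanh_iff {a b : EReal} : etanh a ≤ etanh b ↔ a ≤ b :=
  etanh_strictMono.le_iff_le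

lemma etanh_inj {a b : EReal} (h : etanh a = etanh b) : a = b :=
  etanh_strictMono.injective h

/-- convergence in `EReal` is equivalent to convergence of `etanh`-values. -/
lemma etanh_tendsto_iff {x : ℕ → EReal} {a : EReal} :
    Tendsto x atTop (𝓝 a) ↔ Tendsto (fun n => etanh (x n)) atTop (𝓝 (etanh a)) := by
  constructor
  · exact fun h => (etanh_continuous.tendsto a).comp h
  · intro h
    have hE : Tendsto (fun n => etanhIso (x n)) atTop (𝓝 (etanhIso a)) := by
      rw [tendsto_subtype_rng]
      exact h
    have h2 := (etanhIso.toHomeomorph.symm.continuous.tendsto (etanhIso a)).comp hE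
    have he : (⇑etanhIso.symm ∘ fun n => etanhIso (x n)) = x := by
      funext n; simp
    rw [← he]
    simpa using h2

lemma tanh_tendsto_iff {s : ℕ → ℝ} {t : ℝ} :
    Tendsto s atTop (𝓝 t) ↔ Tendsto (fun n => Real.tanh (s n)) atTop (𝓝 (Real.tanh t)) := by
  constructor
  · exact fun h => (tanh_continuous.tendsto t).comp h
  · intro h
    have h' : Tendsto (fun n => etanh ((s n : EReal))) atTop (𝓝 (etanh (t : EReal))) := by
      simpa using h
    have := etanh_tendsto_iff.2 h'
    exact EReal.tendsto_coe.1 this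
/-! ### dSqz facts -/

lemma dSqz_nonneg (z z' : Rsq) : 0 ≤ dSqz z z' := Real.sqrt_nonneg _

lemma dSqz_comm (z z' : Rsq) : dSqz z z' = dSqz z' z := by
  unfold dSqz; ring_nf

lemma abs_fst_le_dSqz (z z' : Rsq) : |(theta z).1 - (theta z').1| ≤ dSqz z z' := by
  rw [← Real.sqrt_sq_eq_abs]
  exact Real.sqrt_le_sqrt (by nlinarith [sq_nonneg ((theta z).2 - (theta z').2)])

lemma abs_snd_le_dSqz (z z' : Rsq) : |(theta z).2 - (theta z').2| ≤ dSqz z z' := by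
  rw [← Real.sqrt_sq_eq_abs]
  exact Real.sqrt_le_sqrt (by nlinarith [sq_nonneg ((theta z).1 - (theta z').1)])

lemma abs_theta_fst_le_one (z : Rsq) : |(theta z).1| ≤ 1 := by
  rcases z with p | b
  · have h1 : |etanh p.1| ≤ 1 := abs_etanh_le_one p.1
    have h2 : (1:ℝ) ≤ 1 + |p.2| := by have := abs_nonneg p.2; linarith
    have h3 : (0:ℝ) < 1 + |p.2| := by positivity
    show |etanh p.1 / (1 + |p.2|)| ≤ 1
    rw [abs_div, abs_of_pos h3, div_le_one h3]
    linarith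
  · simp [theta]

lemma abs_theta_snd_le_one (z : Rsq) : |(theta z).2| ≤ 1 := by
  rcases z with p | b
  · exact abs_tanh_le_one p.2
  · rcases b with _ | _ <;> simp [theta]

lemma dSqz_le_three (z z' : Rsq) : dSqz z z' ≤ 3 := by
  have h1 := abs_theta_fst_le_one z
  have h2 := abs_theta_fst_le_one z'
  have h3 := abs_theta_snd_le_one z
  have h4 := abs_theta_snd_le_one z'
  have : ((theta z).1 - (theta z').1) ^ 2 + ((theta z).2 - (theta z').2) ^ 2 ≤ 9 := by
    have a1 : |(theta z).1 - (theta z').1| ≤ 2 := (abs_sub _ _).trans (by linarith)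
    have a2 : |(theta z).2 - (theta z').2| ≤ 2 := (abs_sub _ _).trans (by linarith)
    nlinarith [abs_nonneg ((theta z).1 - (theta z').1), abs_nonneg ((theta z).2 - (theta z').2),
      sq_abs ((theta z).1 - (theta z').1), sq_abs ((theta z).2 - (theta z').2)]
  calc dSqz z z' ≤ Real.sqrt 9 := Real.sqrt_le_sqrt this
  _ = 3 := by
      rw [show (9:ℝ) = 3^2 by norm_num, Real.sqrt_sq (by norm_num)]
/-! ### Hausdorff-type closeness from the M1 distance -/

/-- Hausdorff-type `ε`-closeness of the (starred) filled graphs. -/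
def Close (π₁ π₂ : PathSp) (ε : ℝ) : Prop :=
  (∀ p ∈ fgraph π₁, ∃ z ∈ starSet (fgraph π₂), dSqz (Sum.inl p) z ≤ ε) ∧
  (∀ p ∈ fgraph π₂, ∃ z ∈ starSet (fgraph π₁), dSqz (Sum.inl p) z ≤ ε)

lemma inr_false_mem_starSet (G : Set (EReal × ℝ)) : Sum.inr false ∈ starSet G :=
  Or.inr (Or.inl rfl)

lemma inr_true_mem_starSet (G : Set (EReal × ℝ)) : Sum.inr true ∈ starSet G :=
  Or.inr (Or.inr rfl)

/-- The canonical monotone correspondence. -/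
def C0 (A B : Set Rsq) : Set (Rsq × Rsq) :=
  ({Sum.inr false} ×ˢ B) ∪ (A ×ˢ {Sum.inr true})

lemma sLt_to_inr_false (π : PathSp) (z : Rsq) : ¬ sLt π z (Sum.inr false) := by
  rcases z with p | b <;> simp [sLt]

lemma sLt_from_inr_true (π : PathSp) (z : Rsq) : ¬ sLt π (Sum.inr true) z := by
  rcases z with p | b <;> simp [sLt]

lemma C0_isCorr (G₁ G₂ : Set (EReal × ℝ)) :
    IsCorr (starSet G₁) (starSet G₂) (C0 (starSet G₁) (starSet G₂)) := by
  refine ⟨?_, fun a ha => ⟨Sum.inr true, inr_true_mem_starSet _, Or.inr ⟨ha, rfl⟩⟩,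
    fun b hb => ⟨Sum.inr false, inr_false_mem_starSet _, Or.inl ⟨rfl, hb⟩⟩⟩
  rintro ⟨a, b⟩ (⟨ha, hb⟩ | ⟨ha, hb⟩)
  · exact ⟨by simp at ha; simp [ha, inr_false_mem_starSet], hb⟩
  · exact ⟨ha, by simp at hb; simp [hb, inr_true_mem_starSet]⟩

lemma C0_isMono (π₁ π₂ : PathSp) (A B : Set Rsq) : IsMono π₁ π₂ (C0 A B) := by
  rintro ⟨z, hz, z', hz', h1, h2⟩
  rcases hz' with ⟨hz'1, -⟩ | ⟨-, hz'2⟩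
  · simp only [Set.mem_singleton_iff] at hz'1
    rw [hz'1] at h1
    exact sLt_to_inr_false π₁ _ h1
  · simp only [Set.mem_singleton_iff] at hz'2
    rw [hz'2] at h2
    exact sLt_from_inr_true π₂ _ h2

lemma dM1_set_nonempty (π₁ π₂ : PathSp) :
    {h | ∃ C, IsCorr (starSet (fgraph π₁)) (starSet (fgraph π₂)) C ∧ IsMono π₁ π₂ C ∧
      h = corrSup C}.Nonempty :=
  ⟨_, _, C0_isCorr _ _, C0_isMono _ _ _ _, rfl⟩

lemma corrSup_nonneg {C : Set (Rsq × Rsq)} (hC : C.Nonempty) : 0 ≤ corrSup C := by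
  obtain ⟨z, hz⟩ := hC
  exact le_trans (dSqz_nonneg z.1 z.2)
    (le_csSup ⟨3, by rintro x ⟨w, -, rfl⟩; exact dSqz_le_three _ _⟩ ⟨z, hz, rfl⟩)

lemma corr_nonempty {A B : Set Rsq} {C : Set (Rsq × Rsq)} (hA : A.Nonempty)
    (hC : IsCorr A B C) : C.Nonempty := by
  obtain ⟨a, ha⟩ := hA
  obtain ⟨b, -, hab⟩ := hC.2.1 a ha
  exact ⟨(a, b), hab⟩

lemma dM1_set_nonneg (π₁ π₂ : PathSp) :
    ∀ h ∈ {h | ∃ C, IsCorr (starSet (fgraph π₁)) (starSet (fgraph π₂)) C ∧ IsMono π₁ π₂ C ∧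
      h = corrSup C}, 0 ≤ h := by
  rintro h ⟨C, hC, -, rfl⟩
  exact corrSup_nonneg (corr_nonempty ⟨_, inr_false_mem_starSet _⟩ hC)

lemma dM1_nonneg (π₁ π₂ : PathSp) : 0 ≤ dM1 π₁ π₂ :=
  le_csInf (dM1_set_nonempty π₁ π₂) (dM1_set_nonneg π₁ π₂)

lemma close_of_dM1_lt {π₁ π₂ : PathSp} {ε : ℝ} (h : dM1 π₁ π₂ < ε) : Close π₁ π₂ ε := by
  obtain ⟨h', ⟨C, hC, -, rfl⟩, hlt⟩ :=
    (csInf_lt_iff ⟨0, dM1_set_nonneg π₁ π₂⟩ (dM1_set_nonempty π₁ π₂)).1 h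
  have hbdd : BddAbove ((fun z : Rsq × Rsq => dSqz z.1 z.2) '' C) :=
    ⟨3, by rintro x ⟨w, -, rfl⟩; exact dSqz_le_three _ _⟩
  constructor
  · intro p hp
    obtain ⟨b, hb, hab⟩ := hC.2.1 (Sum.inl p) (Or.inl ⟨p, hp, rfl⟩)
    exact ⟨b, hb, (le_csSup hbdd ⟨_, hab, rfl⟩).trans hlt.le⟩
  · intro p hp
    obtain ⟨a, ha, hab⟩ := hC.2.2 (Sum.inl p) (Or.inl ⟨p, hp, rfl⟩)
    refine ⟨a, ha, ?_⟩
    rw [dSqz_comm]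
    exact (le_csSup hbdd ⟨_, hab, rfl⟩).trans hlt.le

/-- From M1 convergence, a sequence of closeness levels tending to `0`. -/
lemma exists_close_seq {πn : ℕ → PathSp} {π : PathSp} (hconv : M1Conv πn π) :
    ∃ ε : ℕ → ℝ, (∀ n, 0 < ε n) ∧ Tendsto ε atTop (𝓝 0) ∧
      ∀ n, Close (πn n) π (ε n) := by
  refine ⟨fun n => dM1 (πn n) π + 1/(n+1), fun n => ?_, ?_, fun n => ?_⟩
  · have := dM1_nonneg (πn n) π
    have : (0:ℝ) < 1/(n+1) := by positivity
    linarith [dM1_nonneg (πn n) π]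
  · have h2 : Tendsto (fun n : ℕ => 1/((n:ℝ)+1)) atTop (𝓝 0) :=
      tendsto_one_div_add_atTop_nhds_zero_nat
    simpa using hconv.add h2
  · apply close_of_dM1_lt
    have h : (0:ℝ) < 1/((n:ℝ)+1) := by positivity
    simp only []
    linarith
/-! ### transfer through the squeezed metric -/

@[simp] lemma theta_inl (p : EReal × ℝ) :
    theta (Sum.inl p) = (etanh p.1 / (1 + |p.2|), Real.tanh p.2) := rfl

@[simp] lemma theta_inr (b : Bool) : theta (Sum.inr b) = (0, if b then 1 else -1) := rfl

/-- Main transfer lemma: if `z n` is `dSqz`-close to `Sum.inl (p n)` with times of `p n`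
converging to a real time `t`, then eventually `z n = Sum.inl (q n)` with times of `q n`
converging to `t` and `etanh`-values asymptotically equal. -/
lemma transfer {zn : ℕ → Rsq} {pn : ℕ → EReal × ℝ} {en : ℕ → ℝ} {t : ℝ}
    (hen : ∀ n, 0 ≤ en n)
    (hd : ∀ n, dSqz (Sum.inl (pn n)) (zn n) ≤ en n)
    (he : Tendsto en atTop (𝓝 0))
    (hp2 : Tendsto (fun n => (pn n).2) atTop (𝓝 t)) :
    ∃ qn : ℕ → EReal × ℝ, (∀ᶠ n in atTop, zn n = Sum.inl (qn n)) ∧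
      Tendsto (fun n => (qn n).2) atTop (𝓝 t) ∧
      Tendsto (fun n => etanh (qn n).1 - etanh (pn n).1) atTop (𝓝 0) := by
  classical
  set qn : ℕ → EReal × ℝ := fun n => match zn n with
    | Sum.inl q => q
    | Sum.inr _ => pn n with hqn
  have hqn' : ∀ n q, zn n = Sum.inl q → qn n = q := by
    intro n q hz; simp [qn, hz]
  have hqn'' : ∀ n b, zn n = Sum.inr b → qn n = pn n := by
    intro n b hz; simp [qn, hz]
  have htanh : Tendsto (fun n => Real.tanh (pn n).2) atTop (𝓝 (Real.tanh t)) :=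
    tanh_tendsto_iff.1 hp2
  have hc1 : Real.tanh t < 1 := tanh_lt_one t
  have hc2 : -1 < Real.tanh t := neg_one_lt_tanh t
  set c : ℝ := min (1 - Real.tanh t) (Real.tanh t + 1) with hc
  have hcpos : 0 < c := lt_min (by linarith) (by linarith)
  have h1 : ∀ᶠ n in atTop, en n < c/2 := he.eventually (eventually_lt_nhds (by linarith))
  have h2 : ∀ᶠ n in atTop, |Real.tanh (pn n).2 - Real.tanh t| < c/2 := by
    have h0 : Tendsto (fun n => |Real.tanh (pn n).2 - Real.tanh t|) atTop (𝓝 0) := by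
      simpa using (htanh.sub_const (Real.tanh t)).abs
    exact h0.eventually (eventually_lt_nhds (by linarith))
  -- eventually z n is an inl
  have hev : ∀ᶠ n in atTop, zn n = Sum.inl (qn n) := by
    filter_upwards [h1, h2] with n h1 h2
    rcases hz : zn n with q | b
    · rw [hqn' n q hz]
    · exfalso
      have hsnd := abs_snd_le_dSqz (Sum.inl (pn n)) (zn n)
      rw [hz] at hsnd
      simp only [theta_inl, theta_inr] at hsnd
      have hy1 : Real.tanh (pn n).2 < 1 := tanh_lt_one _
      have hy2 : -1 < Real.tanh (pn n).2 := neg_one_lt_tanh _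
      have habs := abs_lt.1 h2
      have hle1 : c ≤ 1 - Real.tanh t := min_le_left _ _
      have hle2 : c ≤ Real.tanh t + 1 := min_le_right _ _
      have hd' := hd n
      rw [hz] at hd'
      rcases b with _ | _
      · simp only [Bool.false_eq_true, if_false] at hsnd
        have : |Real.tanh (pn n).2 - (-1)| = Real.tanh (pn n).2 + 1 := by
          rw [abs_of_pos]; ring; linarith
        rw [this] at hsnd
        linarith
      · simp only [if_true] at hsnd
        have : |Real.tanh (pn n).2 - 1| = 1 - Real.tanh (pn n).2 := by
          rw [abs_of_neg] <;> linarith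
        rw [this] at hsnd
        linarith
  -- second coordinates converge
  have hsnd2 : Tendsto (fun n => Real.tanh (qn n).2) atTop (𝓝 (Real.tanh t)) := by
    have hb : ∀ᶠ n in atTop, |Real.tanh (qn n).2 - Real.tanh (pn n).2| ≤ en n := by
      filter_upwards [hev] with n hev
      have hd' := hd n
      rw [hev] at hd'
      have := abs_snd_le_dSqz (Sum.inl (pn n)) (Sum.inl (qn n))
      simp only [theta_inl] at this
      rw [abs_sub_comm]
      exact this.trans hd'
    have hdiff : Tendsto (fun n => Real.tanh (qn n).2 - Real.tanh (pn n).2) atTop (𝓝 0) := by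
      apply squeeze_zero_norm' _ he
      filter_upwards [hb] with n hb
      simpa using hb
    have := hdiff.add htanh
    simpa using this
  have hq2 : Tendsto (fun n => (qn n).2) atTop (𝓝 t) := tanh_tendsto_iff.2 hsnd2
  -- first coordinates
  have han : Tendsto (fun n => 1 + |(pn n).2|) atTop (𝓝 (1 + |t|)) :=
    tendsto_const_nhds.add hp2.abs
  have hbn : Tendsto (fun n => 1 + |(qn n).2|) atTop (𝓝 (1 + |t|)) :=
    tendsto_const_nhds.add hq2.abs
  have key : ∀ᶠ n in atTop, |etanh (qn n).1 - etanh (pn n).1| ≤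
      (1 + |(qn n).2|) * en n + |(1 + |(qn n).2|) - (1 + |(pn n).2|)| := by
    filter_upwards [hev] with n hev
    have hfst := abs_fst_le_dSqz (Sum.inl (pn n)) (Sum.inl (qn n))
    simp only [theta_inl] at hfst
    have hd' := hd n
    rw [hev] at hd'
    have hfst' := hfst.trans hd'
    set a := 1 + |(pn n).2| with ha
    set b := 1 + |(qn n).2| with hbb
    have hapos : (0:ℝ) < a := by rw [ha]; positivity
    have hbpos : (0:ℝ) < b := by rw [hbb]; positivity
    have hu : etanh (pn n).1 = a * (etanh (pn n).1 / a) := by field_simp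
    have hv : etanh (qn n).1 = b * (etanh (qn n).1 / b) := by field_simp
    have hP : |etanh (pn n).1 / a| ≤ 1 := by
      rw [abs_div, abs_of_pos hapos, div_le_one hapos]
      have h1a : (1:ℝ) ≤ a := by rw [ha]; have := abs_nonneg (pn n).2; linarith
      calc |etanh (pn n).1| ≤ 1 := abs_etanh_le_one (pn n).1
      _ ≤ a := h1a
    calc |etanh (qn n).1 - etanh (pn n).1|
        = |b * (etanh (qn n).1 / b - etanh (pn n).1 / a) + (b - a) * (etanh (pn n).1 / a)| := by
          congr 1; field_simp; ring
      _ ≤ |b * (etanh (qn n).1 / b - etanh (pn n).1 / a)| + |(b - a) * (etanh (pn n).1 / a)| :=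
          abs_add_le _ _
      _ ≤ b * en n + |b - a| := by
          rw [abs_mul, abs_mul, abs_of_pos hbpos]
          have e1 : |etanh (qn n).1 / b - etanh (pn n).1 / a| ≤ en n := by
            rw [abs_sub_comm]; exact hfst'
          have e2 : |b - a| * |etanh (pn n).1 / a| ≤ |b - a| * 1 :=
            mul_le_mul_of_nonneg_left hP (abs_nonneg _)
          have e3 : b * |etanh (qn n).1 / b - etanh (pn n).1 / a| ≤ b * en n :=
            mul_le_mul_of_nonneg_left e1 hbpos.le
          linarith
  have hglim : Tendsto (fun n => (1 + |(qn n).2|) * en n +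
      |(1 + |(qn n).2|) - (1 + |(pn n).2|)|) atTop
      (𝓝 ((1 + |t|) * 0 + |(1 + |t|) - (1 + |t|)|)) := (hbn.mul he).add (hbn.sub han).abs
  have hzero : (1 + |t|) * 0 + |(1 + |t|) - (1 + |t|)| = 0 := by simp
  rw [hzero] at hglim
  have hdiff1 : Tendsto (fun n => etanh (qn n).1 - etanh (pn n).1) atTop (𝓝 0) := by
    apply squeeze_zero_norm' _ hglim
    filter_upwards [key] with n key
    simpa using key
  exact ⟨qn, hev, hq2, hdiff1⟩
/-! ### limits of filled graphs -/

lemma mem_uIcc' {x a b : EReal} : x ∈ Set.uIcc a b ↔ min a b ≤ x ∧ x ≤ max a b := by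
  rw [Set.uIcc, Set.mem_Icc]

lemma max_mem_uIcc {a b : EReal} : max a b ∈ Set.uIcc a b := by
  rcases max_cases a b with ⟨h, -⟩ | ⟨h, -⟩ <;> rw [h]
  exacts [Set.left_mem_uIcc, Set.right_mem_uIcc]

lemma min_mem_uIcc {a b : EReal} : min a b ∈ Set.uIcc a b := by
  rcases min_cases a b with ⟨h, -⟩ | ⟨h, -⟩ <;> rw [h]
  exacts [Set.left_mem_uIcc, Set.right_mem_uIcc]

/-- Filled graphs are sequentially closed when the times converge to a real time. -/
lemma fgraph_lim {π : PathSp} {xk : ℕ → EReal} {tk : ℕ → ℝ} {x : EReal} {t : ℝ}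
    (hmem : ∀ᶠ k in atTop, (xk k, tk k) ∈ fgraph π)
    (hx : Tendsto xk atTop (𝓝 x)) (ht : Tendsto tk atTop (𝓝 t)) :
    (x, t) ∈ fgraph π := by
  have htI : t ∈ π.I := by
    refine π.closed_I.mem_of_tendsto ht ?_
    filter_upwards [hmem] with k hk using hk.1
  refine ⟨htI, ?_⟩
  have htri : ∃ᶠ k in atTop, (tk k = t ∨ t < tk k ∨ tk k < t) := by
    apply Filter.Frequently.of_forall
    intro k
    rcases lt_trichotomy (tk k) t with hh | hh | hh
    · exact Or.inr (Or.inr hh)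
    · exact Or.inl hh
    · exact Or.inr (Or.inl hh)
  rw [Filter.frequently_or_distrib, Filter.frequently_or_distrib] at htri
  rcases htri with hcase | hcase | hcase
  · -- infinitely many times equal to t
    obtain ⟨φ, hφ, hφt⟩ := Filter.extraction_of_frequently_atTop hcase
    have hcl : IsClosed (Set.uIcc (π.l t) (π.r t)) := isClosed_Icc
    refine hcl.mem_of_tendsto (hx.comp hφ.tendsto_atTop) ?_
    filter_upwards [hφ.tendsto_atTop.eventually hmem] with k hk
    have := hk.2
    rwa [hφt k] at this
  · -- times > t : value is r t
    obtain ⟨φ, hφ, hφt⟩ := Filter.extraction_of_frequently_atTop hcase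
    have hmem' : ∀ᶠ k in atTop, (xk (φ k), tk (φ k)) ∈ fgraph π :=
      hφ.tendsto_atTop.eventually hmem
    obtain ⟨N, hN⟩ := Filter.eventually_atTop.1 hmem'
    have htend : Tendsto (fun k => tk (φ k)) atTop (𝓝[π.I ∩ Set.Ioi t] t) := by
      rw [tendsto_nhdsWithin_iff]
      refine ⟨ht.comp hφ.tendsto_atTop, ?_⟩
      filter_upwards [hmem', Filter.eventually_atTop.2 ⟨0, fun k _ => hφt k⟩] with k h1 h2
      exact ⟨h1.1, h2⟩
    have hr : Tendsto (fun k => π.r (tk (φ k))) atTop (𝓝 (π.r t)) :=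
      (π.right_cont t htI).comp htend
    have hl : Tendsto (fun k => π.l (tk (φ k))) atTop (𝓝 (π.r t)) :=
      (π.right_lim t htI).comp htend
    have hmin : Tendsto (fun k => min (π.l (tk (φ k))) (π.r (tk (φ k)))) atTop
        (𝓝 (min (π.r t) (π.r t))) := hl.min hr
    have hmax : Tendsto (fun k => max (π.l (tk (φ k))) (π.r (tk (φ k)))) atTop
        (𝓝 (max (π.r t) (π.r t))) := hl.max hr
    simp only [min_self, max_self] at hmin hmax
    have hxφ : Tendsto (fun k => xk (φ k)) atTop (𝓝 x) := hx.comp hφ.tendsto_atTop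
    have h1 : π.r t ≤ x := by
      refine le_of_tendsto_of_tendsto hmin hxφ ?_
      filter_upwards [hmem'] with k hk using (mem_uIcc'.1 hk.2).1
    have h2 : x ≤ π.r t := by
      refine le_of_tendsto_of_tendsto hxφ hmax ?_
      filter_upwards [hmem'] with k hk using (mem_uIcc'.1 hk.2).2
    have : x = π.r t := le_antisymm h2 h1
    rw [this]
    exact Set.right_mem_uIcc
  · -- times < t : value is l t
    obtain ⟨φ, hφ, hφt⟩ := Filter.extraction_of_frequently_atTop hcase
    have hmem' : ∀ᶠ k in atTop, (xk (φ k), tk (φ k)) ∈ fgraph π :=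
      hφ.tendsto_atTop.eventually hmem
    have htend : Tendsto (fun k => tk (φ k)) atTop (𝓝[π.I ∩ Set.Iio t] t) := by
      rw [tendsto_nhdsWithin_iff]
      refine ⟨ht.comp hφ.tendsto_atTop, ?_⟩
      filter_upwards [hmem', Filter.eventually_atTop.2 ⟨0, fun k _ => hφt k⟩] with k h1 h2
      exact ⟨h1.1, h2⟩
    have hr : Tendsto (fun k => π.r (tk (φ k))) atTop (𝓝 (π.l t)) :=
      (π.left_lim t htI).comp htend
    have hl : Tendsto (fun k => π.l (tk (φ k))) atTop (𝓝 (π.l t)) :=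
      (π.left_cont t htI).comp htend
    have hmin : Tendsto (fun k => min (π.l (tk (φ k))) (π.r (tk (φ k)))) atTop
        (𝓝 (min (π.l t) (π.l t))) := hl.min hr
    have hmax : Tendsto (fun k => max (π.l (tk (φ k))) (π.r (tk (φ k)))) atTop
        (𝓝 (max (π.l t) (π.l t))) := hl.max hr
    simp only [min_self, max_self] at hmin hmax
    have hxφ : Tendsto (fun k => xk (φ k)) atTop (𝓝 x) := hx.comp hφ.tendsto_atTop
    have h1 : π.l t ≤ x := by
      refine le_of_tendsto_of_tendsto hmin hxφ ?_
      filter_upwards [hmem'] with k hk using (mem_uIcc'.1 hk.2).1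
    have h2 : x ≤ π.l t := by
      refine le_of_tendsto_of_tendsto hxφ hmax ?_
      filter_upwards [hmem'] with k hk using (mem_uIcc'.1 hk.2).2
    have : x = π.l t := le_antisymm h2 h1
    rw [this]
    exact Set.left_mem_uIcc
/-! ### approximation lemmas -/

lemma mem_of_inl_mem_starSet {G : Set (EReal × ℝ)} {q : EReal × ℝ}
    (h : Sum.inl q ∈ starSet G) : q ∈ G := by
  rcases h with ⟨p, hp, hpq⟩ | hh | hh
  · obtain rfl : p = q := Sum.inl.inj hpq
    exact hp
  · simp at hh
  · simp at hh

/-- Approximating a fixed point of `fgraph π` by points of `fgraph (πn n)`. -/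
lemma approx_seq {πn : ℕ → PathSp} {π : PathSp} {ε : ℕ → ℝ}
    (hε0 : ∀ n, 0 < ε n) (hε : Tendsto ε atTop (𝓝 0))
    (hc : ∀ n, Close (πn n) π (ε n)) {p : EReal × ℝ} (hp : p ∈ fgraph π) :
    ∃ qn : ℕ → EReal × ℝ, (∀ᶠ n in atTop, qn n ∈ fgraph (πn n)) ∧
      Tendsto (fun n => (qn n).2) atTop (𝓝 p.2) ∧
      Tendsto (fun n => (qn n).1) atTop (𝓝 p.1) := by
  have hch : ∀ n, ∃ z ∈ starSet (fgraph (πn n)), dSqz (Sum.inl p) z ≤ ε n :=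
    fun n => (hc n).2 p hp
  choose zn hzn hdn using hch
  obtain ⟨qn, hev, hq2, hq1⟩ := transfer (pn := fun _ => p) (fun n => (hε0 n).le) hdn hε
    tendsto_const_nhds
  refine ⟨qn, ?_, hq2, ?_⟩
  · filter_upwards [hev] with n hev
    exact mem_of_inl_mem_starSet (hev ▸ hzn n)
  · rw [etanh_tendsto_iff]
    have := hq1.add_const (etanh p.1)
    simpa using this

/-- Reverse approximation: points of `fgraph (πn (φ k))` with converging times have a
subsequence whose values converge to the value of a point of `fgraph π`. -/
lemma approx_rev {πn : ℕ → PathSp} {π : PathSp} {ε : ℕ → ℝ}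
    (hε0 : ∀ n, 0 < ε n) (hε : Tendsto ε atTop (𝓝 0))
    (hc : ∀ n, Close (πn n) π (ε n)) {φ : ℕ → ℕ} (hφ : Tendsto φ atTop atTop)
    {qk : ℕ → EReal × ℝ} (hq : ∀ᶠ k in atTop, qk k ∈ fgraph (πn (φ k))) {t : ℝ}
    (ht : Tendsto (fun k => (qk k).2) atTop (𝓝 t)) :
    ∃ xt : EReal, ∃ ψ : ℕ → ℕ, StrictMono ψ ∧ (xt, t) ∈ fgraph π ∧
      Tendsto (fun k => (qk (ψ k)).1) atTop (𝓝 xt) := by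
  classical
  have hch : ∀ k, ∃ z ∈ starSet (fgraph π), dSqz (Sum.inl (qk k)) z ≤ ε (φ k) ∨
      ¬ qk k ∈ fgraph (πn (φ k)) := by
    intro k
    by_cases hk : qk k ∈ fgraph (πn (φ k))
    · obtain ⟨z, hz, hd⟩ := (hc (φ k)).1 (qk k) hk
      exact ⟨z, hz, Or.inl hd⟩
    · exact ⟨Sum.inr false, inr_false_mem_starSet _, Or.inr hk⟩
  choose zk hzk hdk using hch
  have hd' : ∀ᶠ k in atTop, dSqz (Sum.inl (qk k)) (zk k) ≤ ε (φ k) := by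
    filter_upwards [hq] with k hk
    rcases hdk k with h | h
    · exact h
    · exact absurd hk h
  -- modify to an everywhere bound
  obtain ⟨N, hN⟩ := Filter.eventually_atTop.1 hd'
  set en : ℕ → ℝ := fun k => if N ≤ k then ε (φ k) else 3 with hen
  have hdall : ∀ k, dSqz (Sum.inl (qk k)) (zk k) ≤ en k := by
    intro k
    by_cases hk : N ≤ k
    · simpa [en, hk] using hN k hk
    · simpa [en, hk] using dSqz_le_three _ _
  have henn : ∀ k, 0 ≤ en k := by
    intro k
    by_cases hk : N ≤ k
    · simpa [en, hk] using (hε0 (φ k)).le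
    · simp [en, hk]
  have hento : Tendsto en atTop (𝓝 0) := by
    have : en =ᶠ[atTop] fun k => ε (φ k) := by
      filter_upwards [Filter.eventually_atTop.2 ⟨N, fun k hk => hk⟩] with k hk
      simp [en, hk]
    exact Tendsto.congr' this.symm (hε.comp hφ)
  obtain ⟨rk, hev, hr2, hr1⟩ := transfer henn hdall hento ht
  -- rk are eventually in fgraph π
  have hrmem : ∀ᶠ k in atTop, rk k ∈ fgraph π := by
    filter_upwards [hev] with k hev
    exact mem_of_inl_mem_starSet (hev ▸ hzk k)
  -- compactness of EReal
  obtain ⟨xt, -, ψ, hψ, hlim⟩ := isCompact_univ.tendsto_subseq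
    (x := fun k => (rk k).1) (fun k => Set.mem_univ _)
  refine ⟨xt, ψ, hψ, ?_, ?_⟩
  · exact fgraph_lim (π := π)
      (hmem := by
        filter_upwards [hψ.tendsto_atTop.eventually hrmem] with k hk
        exact hk)
      (hx := hlim) (ht := hr2.comp hψ.tendsto_atTop)
  · rw [etanh_tendsto_iff]
    have h1 : Tendsto (fun k => etanh (rk (ψ k)).1) atTop (𝓝 (etanh xt)) :=
      etanh_tendsto_iff.1 hlim
    have h2 : Tendsto (fun k => etanh (rk (ψ k)).1 - etanh (qk (ψ k)).1) atTop (𝓝 0) :=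
      hr1.comp hψ.tendsto_atTop
    have := h1.sub h2
    simpa using this

/-- Extraction of a convergent subsequence from a cluster point in the one-point
compactification. -/
lemma cluster_subseq {Y : Type*} [TopologicalSpace Y] [FirstCountableTopology Y]
    {x : Y} {u : ℕ → OnePoint Y} (hx : MapClusterPt (x : OnePoint Y) atTop u) :
    ∃ φ : ℕ → ℕ, StrictMono φ ∧ ∃ y : ℕ → Y, (∀ k, u (φ k) = (y k : OnePoint Y)) ∧
      Tendsto y atTop (𝓝 x) := by
  classical
  obtain ⟨s, hs⟩ := (𝓝 x).exists_antitone_basis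
  have hfreq : ∀ n, ∃ᶠ k in atTop, u k ∈ (fun y : Y => (y : OnePoint Y)) '' s n := by
    intro n
    refine mapClusterPt_iff_frequently.1 hx _ ?_
    exact OnePoint.isOpenMap_coe.image_mem_nhds (hs.mem n)
  obtain ⟨φ, hφ, hmem⟩ := Filter.extraction_forall_of_frequently hfreq
  choose y hy hy' using fun n => hmem n
  refine ⟨φ, hφ, y, fun k => (hy' k).symm, ?_⟩
  exact hs.tendsto hy
/-! ### windows and boundary behaviour -/

lemma not_mem_interior_of_isMax {I : Set ℝ} {t : ℝ} (h : ∀ s ∈ I, s ≤ t) :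
    t ∉ interior I := by
  intro h'
  obtain ⟨ε, hε, hball⟩ := Metric.mem_nhds_iff.1 (mem_interior_iff_mem_nhds.1 h')
  have hmem : t + ε/2 ∈ I := by
    apply hball
    rw [Metric.mem_ball, Real.dist_eq, show t + ε/2 - t = ε/2 by ring,
      abs_of_pos (by linarith)]
    linarith
  linarith [h _ hmem]

lemma not_mem_interior_of_isMin {I : Set ℝ} {t : ℝ} (h : ∀ s ∈ I, t ≤ s) :
    t ∉ interior I := by
  intro h'
  obtain ⟨ε, hε, hball⟩ := Metric.mem_nhds_iff.1 (mem_interior_iff_mem_nhds.1 h')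
  have hmem : t - ε/2 ∈ I := by
    apply hball
    rw [Metric.mem_ball, Real.dist_eq, show t - ε/2 - t = -(ε/2) by ring, abs_neg,
      abs_of_pos (by linarith)]
    linarith
  linarith [h _ hmem]

lemma bdry_min_or_max {I : Set ℝ} (h : I.OrdConnected) {t : ℝ} (ht : t ∈ I)
    (hni : t ∉ interior I) : (∀ s ∈ I, t ≤ s) ∨ (∀ s ∈ I, s ≤ t) := by
  by_contra hcon
  push_neg at hcon
  obtain ⟨⟨a, ha, hat⟩, ⟨b, hb, htb⟩⟩ := hcon
  exact hni (mem_interior.2 ⟨Set.Ioo a b, fun z hz => h.out ha hb ⟨hz.1.le, hz.2.le⟩,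
    isOpen_Ioo, hat, htb⟩)

lemma upper_window {πn : ℕ → PathSp} {π : PathSp} {ε : ℕ → ℝ}
    (hε : Tendsto ε atTop (𝓝 0)) (hc : ∀ n, Close (πn n) π (ε n))
    {t : ℝ} (hmax : ∀ s ∈ π.I, s ≤ t) {δ : ℝ} (hδ : 0 < δ) (S : ℝ) :
    ∀ᶠ n in atTop, ∀ s ∈ (πn n).I, s ∉ Set.Icc (t + δ) S := by
  set c : ℝ := min (Real.tanh (t+δ) - Real.tanh t)
      (min (1 - Real.tanh S) (1 + Real.tanh (t+δ))) with hcdef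
  have hc1 : Real.tanh t < Real.tanh (t+δ) := tanh_strictMono (by linarith)
  have hc2 : Real.tanh S < 1 := tanh_lt_one S
  have hc3 : -1 < Real.tanh (t+δ) := neg_one_lt_tanh _
  have hcpos : 0 < c := lt_min (by linarith) (lt_min (by linarith) (by linarith))
  filter_upwards [hε.eventually (eventually_lt_nhds hcpos)] with n hεn
  intro s hsI hs
  obtain ⟨hs1, hs2⟩ := hs
  have hp : ((πn n).l s, s) ∈ fgraph (πn n) := ⟨hsI, Set.left_mem_uIcc⟩
  obtain ⟨z, hz, hd⟩ := (hc n).1 _ hp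
  have hsnd := (abs_snd_le_dSqz (Sum.inl ((πn n).l s, s)) z).trans_lt (hd.trans_lt hεn)
  have hts : Real.tanh (t+δ) ≤ Real.tanh s := tanh_strictMono.monotone hs1
  have htS : Real.tanh s ≤ Real.tanh S := tanh_strictMono.monotone hs2
  rcases z with q | b
  · have hqf : q ∈ fgraph π := mem_of_inl_mem_starSet hz
    have hq2 : Real.tanh q.2 ≤ Real.tanh t := tanh_strictMono.monotone (hmax _ hqf.1)
    simp only [theta_inl] at hsnd
    have : Real.tanh s - Real.tanh q.2 ≤ |Real.tanh s - Real.tanh q.2| := le_abs_self _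
    have hcle : c ≤ Real.tanh (t+δ) - Real.tanh t := min_le_left _ _
    linarith
  · simp only [theta_inl, theta_inr] at hsnd
    rcases b with _ | _
    · simp only [Bool.false_eq_true, if_false] at hsnd
      have : Real.tanh s - (-1) ≤ |Real.tanh s - (-1)| := le_abs_self _
      have hcle : c ≤ 1 + Real.tanh (t+δ) := (min_le_right _ _).trans (min_le_right _ _)
      linarith
    · simp only [if_true] at hsnd
      have : -(Real.tanh s - 1) ≤ |Real.tanh s - 1| := neg_le_abs _
      have hcle : c ≤ 1 - Real.tanh S := (min_le_right _ _).trans (min_le_left _ _)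
      linarith

lemma lower_window {πn : ℕ → PathSp} {π : PathSp} {ε : ℕ → ℝ}
    (hε : Tendsto ε atTop (𝓝 0)) (hc : ∀ n, Close (πn n) π (ε n))
    {t : ℝ} (hmin : ∀ s ∈ π.I, t ≤ s) {δ : ℝ} (hδ : 0 < δ) (S : ℝ) :
    ∀ᶠ n in atTop, ∀ s ∈ (πn n).I, s ∉ Set.Icc S (t - δ) := by
  set c : ℝ := min (Real.tanh t - Real.tanh (t-δ))
      (min (1 - Real.tanh (t-δ)) (1 + Real.tanh S)) with hcdef
  have hc1 : Real.tanh (t-δ) < Real.tanh t := tanh_strictMono (by linarith)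
  have hc2 : Real.tanh (t-δ) < 1 := tanh_lt_one _
  have hc3 : -1 < Real.tanh S := neg_one_lt_tanh _
  have hcpos : 0 < c := lt_min (by linarith) (lt_min (by linarith) (by linarith))
  filter_upwards [hε.eventually (eventually_lt_nhds hcpos)] with n hεn
  intro s hsI hs
  obtain ⟨hs1, hs2⟩ := hs
  have hp : ((πn n).l s, s) ∈ fgraph (πn n) := ⟨hsI, Set.left_mem_uIcc⟩
  obtain ⟨z, hz, hd⟩ := (hc n).1 _ hp
  have hsnd := (abs_snd_le_dSqz (Sum.inl ((πn n).l s, s)) z).trans_lt (hd.trans_lt hεn)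
  have hts : Real.tanh s ≤ Real.tanh (t-δ) := tanh_strictMono.monotone hs2
  have htS : Real.tanh S ≤ Real.tanh s := tanh_strictMono.monotone hs1
  rcases z with q | b
  · have hqf : q ∈ fgraph π := mem_of_inl_mem_starSet hz
    have hq2 : Real.tanh t ≤ Real.tanh q.2 := tanh_strictMono.monotone (hmin _ hqf.1)
    simp only [theta_inl] at hsnd
    have : -(Real.tanh s - Real.tanh q.2) ≤ |Real.tanh s - Real.tanh q.2| := neg_le_abs _
    have hcle : c ≤ Real.tanh t - Real.tanh (t-δ) := min_le_left _ _
    linarith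
  · simp only [theta_inl, theta_inr] at hsnd
    rcases b with _ | _
    · simp only [Bool.false_eq_true, if_false] at hsnd
      have : Real.tanh s - (-1) ≤ |Real.tanh s - (-1)| := le_abs_self _
      have hcle : c ≤ 1 + Real.tanh S := (min_le_right _ _).trans (min_le_right _ _)
      linarith
    · simp only [if_true] at hsnd
      have : -(Real.tanh s - 1) ≤ |Real.tanh s - 1| := neg_le_abs _
      have hcle : c ≤ 1 - Real.tanh (t-δ) := (min_le_right _ _).trans (min_le_left _ _)
      linarith
/-! ### boundary point approximation -/

lemma boundary_max_case {πn : ℕ → PathSp} {π : PathSp} {ε : ℕ → ℝ}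
    (hn : ∀ n, IsConn (πn n))
    (hε0 : ∀ n, 0 < ε n) (hε : Tendsto ε atTop (𝓝 0)) (hc : ∀ n, Close (πn n) π (ε n))
    {t : ℝ} (htI : t ∈ π.I) (hmax : ∀ s ∈ π.I, s ≤ t) :
    ∃ T : ℕ → ℝ, ∃ N : ℕ, (∀ n ≥ N, T n ∈ (πn n).I ∧ T n ∉ interior (πn n).I) ∧
      Tendsto T atTop (𝓝 t) := by
  obtain ⟨qn, hevm, hq2, -⟩ := approx_seq hε0 hε hc (p := (π.l t, t)) ⟨htI, Set.left_mem_uIcc⟩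
  -- for every positive δ, eventually all of (πn n).I is below t + δ
  have hbound : ∀ δ : ℝ, 0 < δ → ∀ᶠ n in atTop, ∀ s ∈ (πn n).I, s < t + δ := by
    intro δ hδ
    have hsn : ∀ᶠ n in atTop, (qn n).2 < t + δ :=
      hq2.eventually (eventually_lt_nhds (by linarith))
    filter_upwards [upper_window hε hc hmax hδ (t + δ + 1), hevm, hsn] with n hw hm hsn
    intro s hsI
    by_contra hcon
    push_neg at hcon
    by_cases hS : s ≤ t + δ + 1
    · exact hw s hsI ⟨hcon, hS⟩
    · have : t + δ ∈ (πn n).I := (hn n).out hm.1 hsI ⟨hsn.le, hcon⟩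
      exact hw _ this ⟨le_refl _, by linarith⟩
  refine ⟨fun n => sSup (πn n).I, ?_⟩
  obtain ⟨N1, hN1⟩ := Filter.eventually_atTop.1 hevm
  obtain ⟨N2, hN2⟩ := Filter.eventually_atTop.1 (hbound 1 one_pos)
  refine ⟨max N1 N2, ?_, ?_⟩
  · intro n hnN
    have hne : (πn n).I.Nonempty := ⟨(qn n).2, (hN1 n (le_trans (le_max_left _ _) hnN)).1⟩
    have hbd : BddAbove (πn n).I :=
      ⟨t + 1, fun s hs => (hN2 n (le_trans (le_max_right _ _) hnN) s hs).le⟩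
    have hmem : sSup (πn n).I ∈ (πn n).I := (πn n).closed_I.csSup_mem hne hbd
    exact ⟨hmem, not_mem_interior_of_isMax (fun s hs => le_csSup hbd hs)⟩
  · rw [tendsto_order]
    constructor
    · intro a ha
      have h1 : ∀ᶠ n in atTop, a < (qn n).2 := hq2.eventually (eventually_gt_nhds ha)
      filter_upwards [h1, hevm, hbound 1 one_pos] with n h1 hm hb
      have hbd : BddAbove (πn n).I := ⟨t + 1, fun s hs => (hb s hs).le⟩
      exact h1.trans_le (le_csSup hbd hm.1)
    · intro a ha
      have hδ : 0 < (a - t)/2 := by linarith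
      filter_upwards [hbound _ hδ, hevm] with n hb hm
      have hne : (πn n).I.Nonempty := ⟨(qn n).2, hm.1⟩
      have : sSup (πn n).I ≤ t + (a - t)/2 := csSup_le hne (fun s hs => (hb s hs).le)
      linarith

lemma boundary_min_case {πn : ℕ → PathSp} {π : PathSp} {ε : ℕ → ℝ}
    (hn : ∀ n, IsConn (πn n))
    (hε0 : ∀ n, 0 < ε n) (hε : Tendsto ε atTop (𝓝 0)) (hc : ∀ n, Close (πn n) π (ε n))
    {t : ℝ} (htI : t ∈ π.I) (hmin : ∀ s ∈ π.I, t ≤ s) :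
    ∃ T : ℕ → ℝ, ∃ N : ℕ, (∀ n ≥ N, T n ∈ (πn n).I ∧ T n ∉ interior (πn n).I) ∧
      Tendsto T atTop (𝓝 t) := by
  obtain ⟨qn, hevm, hq2, -⟩ := approx_seq hε0 hε hc (p := (π.l t, t)) ⟨htI, Set.left_mem_uIcc⟩
  have hbound : ∀ δ : ℝ, 0 < δ → ∀ᶠ n in atTop, ∀ s ∈ (πn n).I, t - δ < s := by
    intro δ hδ
    have hsn : ∀ᶠ n in atTop, t - δ < (qn n).2 :=
      hq2.eventually (eventually_gt_nhds (by linarith))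
    filter_upwards [lower_window hε hc hmin hδ (t - δ - 1), hevm, hsn] with n hw hm hsn
    intro s hsI
    by_contra hcon
    push_neg at hcon
    by_cases hS : t - δ - 1 ≤ s
    · exact hw s hsI ⟨hS, hcon⟩
    · have : t - δ ∈ (πn n).I := (hn n).out hsI hm.1 ⟨hcon, hsn.le⟩
      exact hw _ this ⟨by linarith, le_refl _⟩
  refine ⟨fun n => sInf (πn n).I, ?_⟩
  obtain ⟨N1, hN1⟩ := Filter.eventually_atTop.1 hevm
  obtain ⟨N2, hN2⟩ := Filter.eventually_atTop.1 (hbound 1 one_pos)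
  refine ⟨max N1 N2, ?_, ?_⟩
  · intro n hnN
    have hne : (πn n).I.Nonempty := ⟨(qn n).2, (hN1 n (le_trans (le_max_left _ _) hnN)).1⟩
    have hbd : BddBelow (πn n).I :=
      ⟨t - 1, fun s hs => (hN2 n (le_trans (le_max_right _ _) hnN) s hs).le⟩
    have hmem : sInf (πn n).I ∈ (πn n).I := (πn n).closed_I.csInf_mem hne hbd
    exact ⟨hmem, not_mem_interior_of_isMin (fun s hs => csInf_le hbd hs)⟩
  · rw [tendsto_order]
    constructor
    · intro a ha
      have hδ : 0 < (t - a)/2 := by linarith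
      filter_upwards [hbound _ hδ, hevm] with n hb hm
      have hne : (πn n).I.Nonempty := ⟨(qn n).2, hm.1⟩
      have : t - (t - a)/2 ≤ sInf (πn n).I := le_csInf hne (fun s hs => (hb s hs).le)
      linarith
    · intro a ha
      have h1 : ∀ᶠ n in atTop, (qn n).2 < a := hq2.eventually (eventually_lt_nhds ha)
      filter_upwards [h1, hevm, hbound 1 one_pos] with n h1 hm hb
      have hbd : BddBelow (πn n).I := ⟨t - 1, fun s hs => (hb s hs).le⟩
      exact (csInf_le hbd hm.1).trans_lt h1

/-- Building the approximating sequence in the one-point compactification. -/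
lemma build_u {Y : Type*} [TopologicalSpace Y] {A : ℕ → Set Y} {x : Y} {g : ℕ → Y} {N : ℕ}
    (hg : ∀ n ≥ N, g n ∈ A n) (hten : Tendsto g atTop (𝓝 x)) :
    ∃ u : ℕ → OnePoint Y,
      (∀ n, u n ∈ insert OnePoint.infty ((fun y : Y => (y : OnePoint Y)) '' A n)) ∧
      Tendsto u atTop (𝓝 (x : OnePoint Y)) := by
  classical
  refine ⟨fun n => if N ≤ n then (g n : OnePoint Y) else OnePoint.infty, ?_, ?_⟩
  · intro n
    by_cases hn : N ≤ n
    · simp only [if_pos hn]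
      exact Set.mem_insert_of_mem _ ⟨g n, hg n hn, rfl⟩
    · simp [hn]
  · have hcg : (fun n => if N ≤ n then (g n : OnePoint Y) else OnePoint.infty) =ᶠ[atTop]
        fun n => (g n : OnePoint Y) := by
      filter_upwards [Filter.eventually_ge_atTop N] with n hn
      simp [hn]
    rw [Filter.tendsto_congr' hcg]
    exact (OnePoint.continuous_coe.tendsto x).comp hten
lemma mem_Lbar_iff {π : PathSp} {p : EReal × ℝ} :
    p ∈ Lbar π ↔ p.2 ∈ π.I ∧ p.1 ≤ max (π.l p.2) (π.r p.2) := Iff.rfl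

lemma mem_Lc_iff {π : PathSp} {p : EReal × ℝ} :
    p ∈ Lc π ↔ ¬ (p.2 ∈ interior π.I ∧ p.1 < min (π.l p.2) (π.r p.2)) := Iff.rfl

/-- **Lemma (Areas left of a path).**
If `π_n ∈ Π^|` converge to `π ∈ Π^|` in the M1 topology, then `L̄(π_n) → L̄(π)` and
`L^c(π_n) → L^c(π)` in the local Hausdorff topology on `Cl(S)`, `S = ℝ̄ × ℝ`. -/
theorem areas_left_of_a_path
    (πn : ℕ → PathSp) (π : PathSp)
    (hn : ∀ n, IsConn (πn n)) (h : IsConn π)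
    (hconv : M1Conv πn π) :
    LHConv (fun n => Lbar (πn n)) (Lbar π) ∧ LHConv (fun n => Lc (πn n)) (Lc π) := by
  obtain ⟨ε, hε0, hεlim, hcl⟩ := exists_close_seq hconv
  constructor
  · constructor
    · -- every point of Lbar π is approximated
      rintro ⟨v, t⟩ hvt
      obtain ⟨htI, hv⟩ := mem_Lbar_iff.1 hvt
      obtain ⟨qn, hevm, hq2, hq1⟩ := approx_seq hε0 hεlim hcl
        (p := (max (π.l t) (π.r t), t)) ⟨htI, max_mem_uIcc⟩
      obtain ⟨N, hN⟩ := Filter.eventually_atTop.1 hevm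
      have hg : ∀ n ≥ N, ((min v (qn n).1, (qn n).2) : EReal × ℝ) ∈ Lbar (πn n) := by
        intro n hnN
        obtain ⟨hI, hval⟩ := hN n hnN
        exact mem_Lbar_iff.2 ⟨hI, le_trans (min_le_right _ _) (mem_uIcc'.1 hval).2⟩
      have hten : Tendsto (fun n => ((min v (qn n).1, (qn n).2) : EReal × ℝ)) atTop
          (𝓝 (v, t)) := by
        have h1 : Tendsto (fun n => min v (qn n).1) atTop
            (𝓝 (min v (max (π.l t) (π.r t)))) := tendsto_const_nhds.min hq1
        rw [min_eq_left hv] at h1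
        exact h1.prodMk_nhds hq2
      exact build_u hg hten
    · -- every cluster point is in Lbar π
      rintro x ⟨u, humem, hclu⟩
      obtain ⟨φ, hφ, y, hyu, hyt⟩ := cluster_subseq hclu
      have hyA : ∀ k, y k ∈ Lbar (πn (φ k)) := by
        intro k
        have hm := humem (φ k)
        rw [hyu k] at hm
        rcases Set.mem_insert_iff.1 hm with hbad | ⟨w, hw, hww⟩
        · exact absurd hbad (by simp [OnePoint.coe_ne_infty])
        · rwa [show w = y k from OnePoint.coe_injective hww] at hw
      have hy2 : Tendsto (fun k => (y k).2) atTop (𝓝 x.2) := (continuous_snd.tendsto x).comp hyt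
      have hy1 : Tendsto (fun k => (y k).1) atTop (𝓝 x.1) := (continuous_fst.tendsto x).comp hyt
      set qk : ℕ → EReal × ℝ := fun k =>
        (max ((πn (φ k)).l (y k).2) ((πn (φ k)).r (y k).2), (y k).2) with hqkdef
      have hqk : ∀ᶠ k in atTop, qk k ∈ fgraph (πn (φ k)) :=
        Filter.Eventually.of_forall (fun k => ⟨(mem_Lbar_iff.1 (hyA k)).1, max_mem_uIcc⟩)
      obtain ⟨xt, ψ, hψ, hxtm, hlim⟩ := approx_rev hε0 hεlim hcl hφ.tendsto_atTop hqk hy2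
      have hle : x.1 ≤ xt := by
        refine le_of_tendsto_of_tendsto (hy1.comp hψ.tendsto_atTop) hlim ?_
        exact Filter.Eventually.of_forall (fun k => (mem_Lbar_iff.1 (hyA (ψ k))).2)
      exact mem_Lbar_iff.2 ⟨hxtm.1, hle.trans (mem_uIcc'.1 hxtm.2).2⟩
  · constructor
    · -- every point of Lc π is approximated
      rintro ⟨v, t⟩ hvt
      have hmem := mem_Lc_iff.1 hvt
      by_cases htI : t ∈ π.I
      · by_cases hvmin : min (π.l t) (π.r t) ≤ v
        · -- interior-compatible case
          obtain ⟨qn, hevm, hq2, hq1⟩ := approx_seq hε0 hεlim hcl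
            (p := (min (π.l t) (π.r t), t)) ⟨htI, min_mem_uIcc⟩
          obtain ⟨N, hN⟩ := Filter.eventually_atTop.1 hevm
          have hg : ∀ n ≥ N, ((max v (qn n).1, (qn n).2) : EReal × ℝ) ∈ Lc (πn n) := by
            intro n hnN
            refine mem_Lc_iff.2 (fun hLo => ?_)
            exact absurd hLo.2 (not_lt.2 (le_trans (mem_uIcc'.1 (hN n hnN).2).1
              (le_max_right _ _)))
          have hten : Tendsto (fun n => ((max v (qn n).1, (qn n).2) : EReal × ℝ)) atTop
              (𝓝 (v, t)) := by
            have h1 : Tendsto (fun n => max v (qn n).1) atTop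
                (𝓝 (max v (min (π.l t) (π.r t)))) := tendsto_const_nhds.max hq1
            rw [max_eq_left hvmin] at h1
            exact h1.prodMk_nhds hq2
          exact build_u hg hten
        · -- boundary case
          have hnotint : t ∉ interior π.I := fun hint => hmem ⟨hint, not_le.1 hvmin⟩
          have hTcase : ∃ T : ℕ → ℝ, ∃ N : ℕ,
              (∀ n ≥ N, T n ∈ (πn n).I ∧ T n ∉ interior (πn n).I) ∧
              Tendsto T atTop (𝓝 t) := by
            rcases bdry_min_or_max h htI hnotint with hmin | hmax
            · exact boundary_min_case hn hε0 hεlim hcl htI hmin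
            · exact boundary_max_case hn hε0 hεlim hcl htI hmax
          obtain ⟨T, N, hT, hTt⟩ := hTcase
          have hg : ∀ n ≥ N, ((v, T n) : EReal × ℝ) ∈ Lc (πn n) :=
            fun n hnN => mem_Lc_iff.2 (fun hLo => (hT n hnN).2 hLo.1)
          exact build_u hg (tendsto_const_nhds.prodMk_nhds hTt)
      · -- time outside the domain
        have hev : ∀ᶠ n in atTop, t ∉ (πn n).I := by
          by_contra hcon
          rw [Filter.not_eventually] at hcon
          obtain ⟨φ, hφ, hφm⟩ := Filter.extraction_of_frequently_atTop
            (hcon.mono fun n hnn => not_not.1 hnn)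
          have hqk : ∀ᶠ k in atTop, (((πn (φ k)).l t, t) : EReal × ℝ) ∈ fgraph (πn (φ k)) :=
            Filter.Eventually.of_forall (fun k => ⟨hφm k, Set.left_mem_uIcc⟩)
          obtain ⟨xt, ψ, hψ, hxtm, -⟩ := approx_rev hε0 hεlim hcl hφ.tendsto_atTop hqk
            tendsto_const_nhds
          exact htI hxtm.1
        obtain ⟨N, hN⟩ := Filter.eventually_atTop.1 hev
        have hg : ∀ n ≥ N, ((v, t) : EReal × ℝ) ∈ Lc (πn n) :=
          fun n hnN => mem_Lc_iff.2 (fun hLo => hN n hnN (interior_subset hLo.1))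
        exact build_u hg tendsto_const_nhds
    · -- every cluster point is in Lc π
      rintro x ⟨u, humem, hclu⟩
      by_contra hx
      have hLo : x ∈ Lo π := not_not.1 hx
      obtain ⟨hint, hvlt⟩ := hLo
      obtain ⟨φ, hφ, y, hyu, hyt⟩ := cluster_subseq hclu
      have hyA : ∀ k, y k ∈ Lc (πn (φ k)) := by
        intro k
        have hm := humem (φ k)
        rw [hyu k] at hm
        rcases Set.mem_insert_iff.1 hm with hbad | ⟨w, hw, hww⟩
        · exact absurd hbad (by simp [OnePoint.coe_ne_infty])
        · rwa [show w = y k from OnePoint.coe_injective hww] at hw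
      have hy2 : Tendsto (fun k => (y k).2) atTop (𝓝 x.2) := (continuous_snd.tendsto x).comp hyt
      have hy1 : Tendsto (fun k => (y k).1) atTop (𝓝 x.1) := (continuous_fst.tendsto x).comp hyt
      obtain ⟨e, he, hball⟩ := Metric.mem_nhds_iff.1 (mem_interior_iff_mem_nhds.1 hint)
      set δ : ℝ := e/2 with hδdef
      have hδ : 0 < δ := by rw [hδdef]; linarith
      have hsub : Set.Icc (x.2 - δ) (x.2 + δ) ⊆ π.I := by
        intro s hs
        apply hball
        rw [Metric.mem_ball, Real.dist_eq, abs_lt]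
        constructor <;> [linarith [hs.1]; linarith [hs.2]]
      have htm1 : x.2 - δ ∈ π.I := hsub ⟨le_refl _, by linarith⟩
      have htm2 : x.2 + δ ∈ π.I := hsub ⟨by linarith, le_refl _⟩
      obtain ⟨an, haev, ha2, -⟩ := approx_seq hε0 hεlim hcl
        (p := (π.l (x.2 - δ), x.2 - δ)) ⟨htm1, Set.left_mem_uIcc⟩
      obtain ⟨bn, hbev, hb2, -⟩ := approx_seq hε0 hεlim hcl
        (p := (π.l (x.2 + δ), x.2 + δ)) ⟨htm2, Set.left_mem_uIcc⟩
      have c1 : Tendsto (fun k => (an (φ k)).2) atTop (𝓝 (x.2 - δ)) :=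
        ha2.comp hφ.tendsto_atTop
      have c2 : Tendsto (fun k => (bn (φ k)).2) atTop (𝓝 (x.2 + δ)) :=
        hb2.comp hφ.tendsto_atTop
      have hd1 : ∀ᶠ k in atTop, (an (φ k)).2 < (y k).2 := by
        have := (hy2.sub c1).eventually (eventually_gt_nhds (show (0:ℝ) < x.2 - (x.2 - δ) by linarith))
        filter_upwards [this] with k hk
        linarith [hk]
      have hd2 : ∀ᶠ k in atTop, (y k).2 < (bn (φ k)).2 := by
        have := (c2.sub hy2).eventually (eventually_gt_nhds (show (0:ℝ) < (x.2 + δ) - x.2 by linarith))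
        filter_upwards [this] with k hk
        linarith [hk]
      have hamem : ∀ᶠ k in atTop, an (φ k) ∈ fgraph (πn (φ k)) :=
        hφ.tendsto_atTop.eventually haev
      have hbmem : ∀ᶠ k in atTop, bn (φ k) ∈ fgraph (πn (φ k)) :=
        hφ.tendsto_atTop.eventually hbev
      set qk : ℕ → EReal × ℝ := fun k =>
        (min ((πn (φ k)).l (y k).2) ((πn (φ k)).r (y k).2), (y k).2) with hqkdef
      have hqev : ∀ᶠ k in atTop, qk k ∈ fgraph (πn (φ k)) ∧ (qk k).1 ≤ (y k).1 := by
        filter_upwards [hd1, hd2, hamem, hbmem] with k h1 h2 h3 h4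
        have hyI : (y k).2 ∈ interior (πn (φ k)).I := by
          refine mem_interior.2 ⟨Set.Ioo (an (φ k)).2 (bn (φ k)).2, ?_, isOpen_Ioo, h1, h2⟩
          exact fun z hz => (hn (φ k)).out h3.1 h4.1 ⟨hz.1.le, hz.2.le⟩
        have hbound : (qk k).1 ≤ (y k).1 := by
          by_contra hlt
          exact mem_Lc_iff.1 (hyA k) ⟨hyI, not_le.1 hlt⟩
        exact ⟨⟨interior_subset hyI, min_mem_uIcc⟩, hbound⟩
      obtain ⟨xt, ψ, hψ, hxtm, hlim⟩ := approx_rev hε0 hεlim hcl hφ.tendsto_atTop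
        (hqev.mono fun k hk => hk.1) hy2
      have h1 : xt ≤ x.1 := by
        refine le_of_tendsto_of_tendsto hlim (hy1.comp hψ.tendsto_atTop) ?_
        exact (hψ.tendsto_atTop.eventually hqev).mono fun k hk => hk.2
      have h2 : min (π.l x.2) (π.r x.2) ≤ xt := (mem_uIcc'.1 hxtm.2).1
      exact absurd (h2.trans h1) (not_le.2 hvlt)
end PathsPaper
end
end
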